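/- arXiv:1604.01610 — 5 statements merged into one kernel-verified Lean document; each statement's English description precedes it below -/
import Mathlib

section
/- Let 𝕂 be ℝ or ℂ, let m ≥ k ≥ 1 be integers, let p be a real number with m < p ≤ 2m, and let n_1, …, n_k be positive integers with n_1 + ⋯ + n_k = m. Suppose ρ' > 0 and there is a constant C such that ( ∑_{i_1,…,i_k=1}^{n} |T(e_{i_1}^{n_1}, …, e_{i_k}^{n_k})|^{ρ'} )^{1/ρ'} ≤ C · ‖T‖ for every positive integer n and every m-linear form T : ℓ_p^n × ⋯ × ℓ_p^n → 𝕂. Then ρ' ≥ p/(p−m). -/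
open Finset NNReal

/-- Power mean: `∑ g^m ≤ n^(1-m/p) (∑ g^p)^(m/p)` for `0 < m < p`. -/
lemma lemB {n : ℕ} (m : ℕ) (p : ℝ) (hm : 0 < m) (hmp : (m : ℝ) < p) (g : Fin n → ℝ≥0) :
    ∑ a, g a ^ (m : ℝ) ≤ (n : ℝ≥0) ^ ((1 : ℝ) - m / p) * (∑ a, g a ^ p) ^ ((m : ℝ) / p) := by
  have hm0 : (0 : ℝ) < m := by exact_mod_cast hm
  have hp0 : (0 : ℝ) < p := hm0.trans hmp
  have hpm : (0 : ℝ) < p - m := by linarith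
  have hpq : Real.HolderConjugate (p / m) (p / (p - m)) := by
    constructor
    · rw [inv_div, inv_div, inv_one, ← add_div, add_sub_cancel, div_self hp0.ne']
    · exact div_pos hp0 hm0
    · exact div_pos hp0 hpm
  have := NNReal.inner_le_Lp_mul_Lq Finset.univ (fun a => g a ^ (m : ℝ))
    (fun _ => (1 : ℝ≥0)) hpq
  simp only [mul_one, one_rpow, Finset.sum_const, Finset.card_univ, Fintype.card_fin,
    nsmul_eq_mul, mul_one] at this
  calc ∑ a, g a ^ (m : ℝ)
      ≤ (∑ a, (g a ^ (m : ℝ)) ^ (p / m)) ^ (1 / (p / m)) *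
        ((n : ℝ≥0)) ^ (1 / (p / (p - m))) := this
    _ = (n : ℝ≥0) ^ ((1 : ℝ) - m / p) * (∑ a, g a ^ p) ^ ((m : ℝ) / p) := by
        rw [mul_comm]
        congr 1
        · congr 1
          field_simp
        · congr 1
          · congr 1 with a
            rw [← NNReal.rpow_mul]
            congr 1
            field_simp
          · rw [one_div_div]

/-- m-fold Hölder inequality for `ℓ_p` with `m = card ι < p`. -/
lemma lemC {ι : Type*} [Fintype ι] [Nonempty ι] {n : ℕ} (p : ℝ)
    (hmp : (Fintype.card ι : ℝ) < p) (f : ι → Fin n → ℝ≥0) :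
    ∑ a, ∏ s, f s a ≤
      (n : ℝ≥0) ^ ((1 : ℝ) - (Fintype.card ι : ℝ) / p) * ∏ s, (∑ a, f s a ^ p) ^ (1 / p : ℝ) := by
  set m : ℕ := Fintype.card ι with hmdef
  have hm : 0 < m := Fintype.card_pos
  have hm0 : (0 : ℝ) < m := by exact_mod_cast hm
  have hp0 : (0 : ℝ) < p := hm0.trans hmp
  by_cases hz : ∀ s, (∑ a, f s a ^ p) ≠ 0
  · set A : ι → ℝ≥0 := fun s => (∑ a, f s a ^ p) ^ (1 / p : ℝ) with hA
    have hA0 : ∀ s, A s ≠ 0 := by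
      intro s
      simp only [hA, ne_eq, NNReal.rpow_eq_zero_iff]
      intro ⟨h1, _⟩; exact hz s h1
    have hApow : ∀ s, (A s) ^ p = ∑ a, f s a ^ p := by
      intro s
      rw [hA]
      dsimp only
      rw [← NNReal.rpow_mul, one_div_mul_cancel hp0.ne', NNReal.rpow_one]
    -- key normalized estimate
    have key : ∑ a, ∏ s, (f s a / A s) ≤ (n : ℝ≥0) ^ ((1 : ℝ) - (m : ℝ) / p) := by
      have amgm : ∀ a, ∏ s, (f s a / A s) ≤
          ∑ s, ((m : ℝ≥0)⁻¹) * ((f s a / A s) ^ (m : ℝ)) := by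
        intro a
        have hw : ∑ _s : ι, ((m : ℝ≥0)⁻¹) = 1 := by
          rw [Finset.sum_const, Finset.card_univ, ← hmdef, nsmul_eq_mul,
            mul_inv_cancel₀]
          exact_mod_cast hm.ne'
        have := NNReal.geom_mean_le_arith_mean_weighted Finset.univ
          (fun _ => (m : ℝ≥0)⁻¹) (fun s => (f s a / A s) ^ (m : ℝ)) hw
        refine le_trans (le_of_eq ?_) this
        refine Finset.prod_congr rfl fun s _ => ?_
        rw [← NNReal.rpow_mul]
        rw [show (((m : ℝ≥0)⁻¹ : ℝ≥0) : ℝ) = (m : ℝ)⁻¹ by push_cast; ring]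
        rw [mul_inv_cancel₀ hm0.ne', NNReal.rpow_one]
      calc ∑ a, ∏ s, (f s a / A s)
          ≤ ∑ a, ∑ s, ((m : ℝ≥0)⁻¹) * ((f s a / A s) ^ (m : ℝ)) :=
            Finset.sum_le_sum fun a _ => amgm a
        _ = ∑ s, ((m : ℝ≥0)⁻¹) * ∑ a, (f s a / A s) ^ (m : ℝ) := by
            rw [Finset.sum_comm]
            exact Finset.sum_congr rfl fun s _ => by rw [Finset.mul_sum]
        _ ≤ ∑ _s : ι, ((m : ℝ≥0)⁻¹) * ((n : ℝ≥0) ^ ((1 : ℝ) - (m : ℝ) / p)) := by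
            refine Finset.sum_le_sum fun s _ => ?_
            refine mul_le_mul_of_nonneg_left ?_ zero_le
            have hnorm : ∑ a, (f s a / A s) ^ p = 1 := by
              simp_rw [NNReal.div_rpow, ← Finset.sum_div, hApow s]
              exact div_self (hz s)
            have := lemB m p hm hmp (fun a => f s a / A s)
            rw [hnorm, NNReal.one_rpow, mul_one] at this
            exact this
        _ = (n : ℝ≥0) ^ ((1 : ℝ) - (m : ℝ) / p) := by
            rw [Finset.sum_const, Finset.card_univ, ← hmdef, nsmul_eq_mul,
              ← mul_assoc, mul_inv_cancel₀, one_mul]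
            exact_mod_cast hm.ne'
    have expand : ∑ a, ∏ s, f s a = (∏ s, A s) * ∑ a, ∏ s, (f s a / A s) := by
      rw [Finset.mul_sum]
      refine Finset.sum_congr rfl fun a _ => ?_
      rw [← Finset.prod_mul_distrib]
      exact Finset.prod_congr rfl fun s _ => (mul_div_cancel₀ _ (hA0 s)).symm
    rw [expand, mul_comm]
    exact mul_le_mul_of_nonneg_right key zero_le
  · push_neg at hz
    obtain ⟨s0, hs0⟩ := hz
    have hf0 : ∀ a, f s0 a = 0 := by
      intro a
      have := Finset.sum_eq_zero_iff.mp hs0 a (Finset.mem_univ a)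
      simpa [NNReal.rpow_eq_zero_iff, hp0.ne'] using this
    have : ∀ a, ∏ s, f s a = 0 := fun a =>
      Finset.prod_eq_zero (Finset.mem_univ s0) (hf0 a)
    simp [this]

/-- **Optimality of the exponent `ρ = p/(p-m)` in the case `m < p ≤ 2m`.**
If `ρ' > 0` and there is a constant `C` such that
`(∑_{i₁,…,i_k=1}^n |T(e_{i₁}^{n₁}, …, e_{i_k}^{n_k})|^{ρ'})^{1/ρ'} ≤ C ⬝ ‖T‖`
for every `n ≥ 1` and every `m`-linear form `T : ℓ_p^n × ⋯ × ℓ_p^n → 𝕂`,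
then `ρ' ≥ p/(p-m)`. -/
theorem stmt3 (𝕂 : Type*) [RCLike 𝕂] (m k : ℕ) (hk : 1 ≤ k) (hkm : k ≤ m)
    (p : ℝ) (hmp : (m : ℝ) < p) (hp2 : p ≤ 2 * m)
    (ν : Fin k → ℕ) (hν : ∀ j, 0 < ν j) (hsum : ∑ j, ν j = m)
    (ρ' : ℝ) (hρ' : 0 < ρ') (C : ℝ)
    (hC : ∀ n : ℕ, 0 < n →
      haveI : Fact (1 ≤ ENNReal.ofReal p) := ⟨ENNReal.one_le_ofReal.mpr (by
        have h1 : (1 : ℝ) ≤ (m : ℝ) := by exact_mod_cast hk.trans hkm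
        linarith)⟩
      ∀ T : ContinuousMultilinearMap 𝕂
          (fun _ : (Σ j : Fin k, Fin (ν j)) => PiLp (ENNReal.ofReal p) (fun _ : Fin n => 𝕂)) 𝕂,
        (∑ i : Fin k → Fin n,
            ‖T (fun s => (WithLp.equiv (ENNReal.ofReal p) (Fin n → 𝕂)).symm
                (Pi.single (i s.1) 1))‖ ^ ρ') ^ (1 / ρ')
          ≤ C * ‖T‖) :
    p / (p - m) ≤ ρ' := by
  haveI : Fact (1 ≤ ENNReal.ofReal p) := ⟨ENNReal.one_le_ofReal.mpr (by
    have h1 : (1 : ℝ) ≤ (m : ℝ) := by exact_mod_cast hk.trans hkm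
    linarith)⟩
  have hm1 : (1 : ℝ) ≤ (m : ℝ) := by exact_mod_cast hk.trans hkm
  have hp0 : (0 : ℝ) < p := by linarith
  have hpm : (0 : ℝ) < p - m := by linarith
  set ι := (Σ j : Fin k, Fin (ν j)) with hι
  haveI : Nonempty ι := ⟨⟨⟨0, hk⟩, ⟨0, hν _⟩⟩⟩
  have hcard : Fintype.card ι = m := by
    simp [hι, Fintype.card_sigma, hsum]
  have hm : 0 < m := hk.trans hkm
  by_contra hlt
  push_neg at hlt
  -- exponent gap
  have hgap : (1 : ℝ) - (m : ℝ) / p < 1 / ρ' := by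
    have h1 : (p - m) / p < 1 / ρ' := by
      rw [div_lt_div_iff₀ hp0 hρ']
      rw [lt_div_iff₀ hpm] at hlt
      nlinarith
    calc (1 : ℝ) - (m : ℝ) / p = (p - m) / p := by field_simp
      _ < 1 / ρ' := h1
  set r : ℝ := 1 / ρ' - (1 - (m : ℝ) / p) with hr
  have hr0 : 0 < r := by rw [hr]; linarith
  -- key claim
  have key : ∀ n : ℕ, 0 < n → ((n : ℝ)) ^ r ≤ C := by
    intro n hn
    classical
    set q := ENNReal.ofReal p with hq
    have hqtop : q ≠ ⊤ := ENNReal.ofReal_ne_top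
    have hqreal : q.toReal = p := ENNReal.toReal_ofReal hp0.le
    set T : ContinuousMultilinearMap 𝕂 (fun _ : ι => PiLp q (fun _ : Fin n => 𝕂)) 𝕂 :=
      ∑ a : Fin n, (ContinuousMultilinearMap.mkPiAlgebra 𝕂 ι 𝕂).compContinuousLinearMap
        (fun _ => PiLp.proj q (fun _ : Fin n => 𝕂) a) with hT
    have hTapp : ∀ x : ι → PiLp q (fun _ : Fin n => 𝕂),
        T x = ∑ a, ∏ s : ι, x s a := by
      intro x
      rw [hT]
      rw [ContinuousMultilinearMap.sum_apply]
      refine Finset.sum_congr rfl fun a _ => ?_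
      simp [ContinuousMultilinearMap.compContinuousLinearMap_apply,
        ContinuousMultilinearMap.mkPiAlgebra_apply]
    set j0 : Fin k := ⟨0, hk⟩ with hj0
    have hcoef : ∀ i : Fin k → Fin n,
        T (fun s => (WithLp.equiv q (Fin n → 𝕂)).symm (Pi.single (i s.1) 1)) =
          if (∀ j, i j = i j0) then (1 : 𝕂) else 0 := by
      intro i
      rw [hTapp]
      have hentry : ∀ (s : ι) (a : Fin n),
          (WithLp.equiv q (Fin n → 𝕂)).symm (Pi.single (i s.1) 1) a =
            if a = i s.1 then (1 : 𝕂) else 0 := by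
        intro s a
        rw [WithLp.equiv_symm_apply, PiLp.toLp_apply, Pi.single_apply]
      have hprod : ∀ a : Fin n,
          (∏ s : ι, (WithLp.equiv q (Fin n → 𝕂)).symm (Pi.single (i s.1) 1) a) =
            if (∀ s : ι, a = i s.1) then (1 : 𝕂) else 0 := by
        intro a
        simp_rw [hentry]
        rw [Finset.prod_boole]
        simp
      simp_rw [hprod]
      have hiff : ∀ a : Fin n,
          (∀ s : ι, a = i s.1) ↔ (a = i j0 ∧ ∀ j, i j = i j0) := by
        intro a
        constructor
        · intro h
          refine ⟨h ⟨j0, ⟨0, hν _⟩⟩, fun j => ?_⟩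
          rw [← h ⟨j, ⟨0, hν _⟩⟩, ← h ⟨j0, ⟨0, hν _⟩⟩]
        · rintro ⟨ha, hconst⟩ s
          rw [ha, (hconst s.1).symm]
      simp_rw [if_congr (hiff _) rfl rfl]
      by_cases hQ : ∀ j, i j = i j0
      · rw [if_pos hQ]
        have heq : ∀ a : Fin n,
            (if a = i j0 ∧ ∀ j, i j = i j0 then (1 : 𝕂) else 0) =
              if a = i j0 then 1 else 0 := fun a => by simp [hQ]
        simp_rw [heq]
        rw [Finset.sum_ite_eq' Finset.univ (i j0) (fun _ => (1 : 𝕂))]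
        simp
      · rw [if_neg hQ]
        have heq : ∀ a : Fin n,
            (if a = i j0 ∧ ∀ j, i j = i j0 then (1 : 𝕂) else 0) = 0 := fun a => by
          simp only [ite_eq_right_iff, and_imp]
          intro _ h; exact absurd h hQ
        simp_rw [heq]
        simp
    have hsumcoef : (∑ i : Fin k → Fin n,
        ‖T (fun s => (WithLp.equiv q (Fin n → 𝕂)).symm (Pi.single (i s.1) 1))‖ ^ ρ')
          = (n : ℝ) := by
      have step1 : ∀ i : Fin k → Fin n,
          ‖T (fun s => (WithLp.equiv q (Fin n → 𝕂)).symm (Pi.single (i s.1) 1))‖ ^ ρ' =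
            if (∀ j, i j = i j0) then (1 : ℝ) else 0 := by
        intro i
        rw [hcoef i]
        split
        · simp
        · simp [Real.zero_rpow hρ'.ne']
      simp_rw [step1]
      rw [Finset.sum_boole]
      norm_cast
      conv_rhs => rw [show n = #(Finset.univ : Finset (Fin n)) by simp]
      refine Finset.card_bij' (fun i _ => i j0) (fun c _ => Function.const (Fin k) c)
        ?_ ?_ ?_ ?_
      · intro i _; exact Finset.mem_univ _
      · intro c _
        simp only [Finset.mem_filter, Finset.mem_univ, true_and]
        intro j; rfl
      · intro i hi
        simp only [Finset.mem_filter, Finset.mem_univ, true_and] at hi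
        funext j
        exact (hi j).symm
      · intro c _; rfl
    have hTnorm : ‖T‖ ≤ (n : ℝ) ^ ((1 : ℝ) - (m : ℝ) / p) := by
      refine ContinuousMultilinearMap.opNorm_le_bound
        (Real.rpow_nonneg (Nat.cast_nonneg n) _) fun x => ?_
      have hnn : ‖T x‖₊ ≤ (n : ℝ≥0) ^ ((1 : ℝ) - (m : ℝ) / p) * ∏ s, ‖x s‖₊ := by
        calc ‖T x‖₊ ≤ ∑ a, ∏ s : ι, ‖x s a‖₊ := by
              rw [hTapp]
              refine le_trans (nnnorm_sum_le _ _) (Finset.sum_le_sum fun a _ => ?_)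
              rw [nnnorm_prod]
          _ ≤ (n : ℝ≥0) ^ ((1 : ℝ) - (Fintype.card ι : ℝ) / p) *
                ∏ s : ι, (∑ a, ‖x s a‖₊ ^ p) ^ (1 / p : ℝ) :=
              lemC p (by rw [hcard]; exact hmp) (fun s a => ‖x s a‖₊)
          _ = (n : ℝ≥0) ^ ((1 : ℝ) - (m : ℝ) / p) * ∏ s, ‖x s‖₊ := by
              rw [hcard]
              congr 1
              refine Finset.prod_congr rfl fun s _ => ?_
              rw [PiLp.nnnorm_eq_sum hqtop, hqreal]
      calc ‖T x‖ = ((‖T x‖₊ : ℝ)) := rfl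
        _ ≤ (((n : ℝ≥0) ^ ((1 : ℝ) - (m : ℝ) / p) * ∏ s, ‖x s‖₊ : ℝ≥0) : ℝ) :=
            NNReal.coe_le_coe.mpr hnn
        _ = (n : ℝ) ^ ((1 : ℝ) - (m : ℝ) / p) * ∏ s, ‖x s‖ := by
            push_cast [NNReal.coe_rpow]
            ring
    -- combine
    have hCn := hC n hn T
    rw [hsumcoef] at hCn
    have hC0 : 0 ≤ C := by
      by_contra h
      push_neg at h
      have h1 : C * ‖T‖ ≤ 0 := mul_nonpos_of_nonpos_of_nonneg h.le (norm_nonneg _)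
      have h2 : (0 : ℝ) < (n : ℝ) ^ (1 / ρ') :=
        Real.rpow_pos_of_pos (by exact_mod_cast hn) _
      linarith
    have hpos : (0 : ℝ) < (n : ℝ) ^ ((1 : ℝ) - (m : ℝ) / p) :=
      Real.rpow_pos_of_pos (by exact_mod_cast hn) _
    have hmain : (n : ℝ) ^ (1 / ρ') ≤ C * (n : ℝ) ^ ((1 : ℝ) - (m : ℝ) / p) :=
      le_trans hCn (mul_le_mul_of_nonneg_left hTnorm hC0)
    have hsplit : (n : ℝ) ^ (1 / ρ') =
        (n : ℝ) ^ r * (n : ℝ) ^ ((1 : ℝ) - (m : ℝ) / p) := by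
      rw [← Real.rpow_add (by exact_mod_cast hn : (0:ℝ) < (n:ℝ))]
      congr 1
      rw [hr]; ring
    rw [hsplit] at hmain
    exact (mul_le_mul_iff_left₀ hpos).mp hmain
  -- derive contradiction
  obtain ⟨N, hN⟩ := exists_nat_gt (max C 1 ^ (1 / r))
  have hmax0 : (0 : ℝ) ≤ max C 1 := le_trans zero_le_one (le_max_right _ _)
  have hN0 : 0 < N := by
    rcases Nat.eq_zero_or_pos N with h | h
    · subst h
      simp only [Nat.cast_zero] at hN
      exact absurd hN (not_lt.mpr (Real.rpow_nonneg hmax0 _))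
    · exact h
  have h1 : max C 1 < (N : ℝ) ^ r := by
    have := Real.rpow_lt_rpow (Real.rpow_nonneg hmax0 (1/r)) hN hr0
    rwa [← Real.rpow_mul hmax0, one_div_mul_cancel hr0.ne', Real.rpow_one] at this
  have := key N hN0
  have : max C 1 < C := lt_of_lt_of_le h1 this
  exact absurd this (not_lt.mpr (le_max_left _ _))
end

section
/- Let 𝕂 be ℝ or ℂ, let m ≥ k ≥ 1 be integers, let n_1, …, n_k be positive integers with n_1 + ⋯ + n_k = m, let r ∈ (0, ∞), and let p be a real number with m < p ≤ 2m. Suppose s ≥ 0 and there is a constant D ≥ 1 such that ( ∑_{i_1,…,i_k=1}^{n} |T(e_{i_1}^{n_1}, …, e_{i_k}^{n_k})|^{r} )^{1/r} ≤ D · n^{s} · ‖T‖ for every positive integer n and every m-linear form T : ℓ_p^n × ⋯ × ℓ_p^n → 𝕂. Then s ≥ max{ (p − rp + rm)/(pr), 0 }. -/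
open Finset

section aux

variable (𝕂 : Type*) [RCLike 𝕂] {ι : Type*} [Fintype ι] (n : ℕ) (q : ENNReal)

/-- The diagonal multilinear form. -/
noncomputable def diagMap : MultilinearMap 𝕂 (fun _ : ι => PiLp q (fun _ : Fin n => 𝕂)) 𝕂 :=
  ∑ j : Fin n, (MultilinearMap.mkPiAlgebra 𝕂 ι 𝕂).compLinearMap
    (fun _ => (LinearMap.proj j).comp (WithLp.linearEquiv q 𝕂 (Fin n → 𝕂)).toLinearMap)

lemma diagMap_apply (x : ι → PiLp q (fun _ : Fin n => 𝕂)) :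
    diagMap 𝕂 n q x = ∑ j : Fin n, ∏ t : ι, (WithLp.equiv q (Fin n → 𝕂)) (x t) j := by
  simp [diagMap]

end aux

/-- Homogenization: a bound on the unit polydisc gives the multiplicative bound. -/
lemma norm_multilinear_le_of_unit {𝕂 : Type*} [RCLike 𝕂] {ι : Type*} [Fintype ι]
    {E F : Type*} [NormedAddCommGroup E] [NormedSpace 𝕂 E]
    [NormedAddCommGroup F] [NormedSpace 𝕂 F]
    (L : MultilinearMap 𝕂 (fun _ : ι => E) F) {C : ℝ} (hC : 0 ≤ C)
    (h : ∀ y : ι → E, (∀ t, ‖y t‖ ≤ 1) → ‖L y‖ ≤ C) (x : ι → E) :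
    ‖L x‖ ≤ C * ∏ t, ‖x t‖ := by
  by_cases hx : ∃ t, x t = 0
  · obtain ⟨t, ht⟩ := hx
    rw [L.map_coord_zero t ht, norm_zero]
    positivity
  · push_neg at hx
    set c : ι → 𝕂 := fun t => (‖x t‖ : 𝕂) with hc
    have hc0 : ∀ t, c t ≠ 0 := fun t => by
      simpa [hc] using norm_ne_zero_iff.2 (hx t)
    set y : ι → E := fun t => (c t)⁻¹ • x t with hy
    have hxy : x = fun t => c t • y t := by
      funext t
      simp [hy, smul_inv_smul₀ (hc0 t)]
    have hyt : ∀ t, ‖y t‖ ≤ 1 := by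
      intro t
      have : ‖y t‖ = ‖x t‖⁻¹ * ‖x t‖ := by
        simp [hy, norm_smul, hc]
      rw [this, inv_mul_cancel₀ (norm_ne_zero_iff.2 (hx t))]
    calc ‖L x‖ = ‖(∏ t, c t) • L y‖ := by rw [hxy, L.map_smul_univ]
      _ = (∏ t, ‖x t‖) * ‖L y‖ := by
          rw [norm_smul]
          congr 1
          rw [norm_prod]
          exact Finset.prod_congr rfl fun t _ => by simp [hc]
      _ ≤ (∏ t, ‖x t‖) * C :=
          mul_le_mul_of_nonneg_left (h y hyt) (Finset.prod_nonneg fun t _ => norm_nonneg _)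
      _ = C * ∏ t, ‖x t‖ := mul_comm _ _

lemma aux1' {ι : Type*} [Fintype ι] [Nonempty ι] (n : ℕ) (a : ι → Fin n → ℝ)
    (ha : ∀ t j, 0 ≤ a t j) (p : ℝ) (hp : (Fintype.card ι : ℝ) < p)
    (hA : ∀ t, (∑ j, a t j ^ p) ≤ 1) :
    ∑ j, ∏ t, a t j ≤ (n : ℝ) ^ (1 - (Fintype.card ι : ℝ) / p) := by
  set m : ℕ := Fintype.card ι with hm
  have hm1 : 1 ≤ m := Fintype.card_pos
  have hmR : (0:ℝ) < m := by exact_mod_cast hm1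
  have hppos : (0:ℝ) < p := hmR.trans hp
  -- step 1: AM-GM pointwise
  have step1 : ∀ j, ∏ t, a t j ≤ (m : ℝ)⁻¹ * ∑ t, a t j ^ (m : ℝ) := by
    intro j
    have := Real.geom_mean_le_arith_mean_weighted Finset.univ (fun _ : ι => (m : ℝ)⁻¹)
      (fun t => a t j ^ (m : ℝ)) (fun _ _ => by positivity)
      (by rw [Finset.sum_const, Finset.card_univ, ← hm, nsmul_eq_mul, mul_inv_cancel₀ hmR.ne'])
      (fun t _ => Real.rpow_nonneg (ha t j) _)
    calc ∏ t, a t j = ∏ t, (a t j ^ (m:ℝ)) ^ (m:ℝ)⁻¹ := by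
          refine Finset.prod_congr rfl fun t _ => ?_
          rw [← Real.rpow_mul (ha t j), mul_inv_cancel₀ hmR.ne', Real.rpow_one]
      _ ≤ ∑ t, (m:ℝ)⁻¹ * a t j ^ (m:ℝ) := this
      _ = (m:ℝ)⁻¹ * ∑ t, a t j ^ (m:ℝ) := by rw [Finset.mul_sum]
  -- step 2: power mean inequality per t
  have step2 : ∀ t, ∑ j, a t j ^ (m:ℝ) ≤ (n : ℝ) ^ (1 - (m:ℝ)/p) := by
    intro t
    have hpm : 1 ≤ p / (m:ℝ) := (one_le_div hmR).2 hp.le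
    have := Real.inner_le_weight_mul_Lp_of_nonneg Finset.univ hpm (fun _ : Fin n => (1:ℝ))
      (fun j => a t j ^ (m:ℝ)) (fun _ => zero_le_one) (fun j => Real.rpow_nonneg (ha t j) _)
    simp only [one_mul] at this
    calc ∑ j, a t j ^ (m:ℝ)
        ≤ (∑ _j : Fin n, (1:ℝ)) ^ (1 - (p/(m:ℝ))⁻¹) * (∑ j, (a t j ^ (m:ℝ)) ^ (p/(m:ℝ))) ^ (p/(m:ℝ))⁻¹ := this
      _ = (n:ℝ) ^ (1 - (m:ℝ)/p) * (∑ j, a t j ^ p) ^ ((m:ℝ)/p) := by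
          rw [Finset.sum_const, Finset.card_univ, Fintype.card_fin, nsmul_eq_mul, mul_one,
            inv_div]
          congr 2
          refine Finset.sum_congr rfl fun j _ => ?_
          rw [← Real.rpow_mul (ha t j)]
          congr 1
          field_simp
      _ ≤ (n:ℝ) ^ (1 - (m:ℝ)/p) * 1 :=
          mul_le_mul_of_nonneg_left
            (Real.rpow_le_one (Finset.sum_nonneg fun j _ => Real.rpow_nonneg (ha t j) _) (hA t)
              (by positivity)) (Real.rpow_nonneg (Nat.cast_nonneg n) _)
      _ = (n:ℝ) ^ (1 - (m:ℝ)/p) := mul_one _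
  calc ∑ j, ∏ t, a t j ≤ ∑ j, (m : ℝ)⁻¹ * ∑ t, a t j ^ (m:ℝ) :=
        Finset.sum_le_sum fun j _ => step1 j
    _ = (m:ℝ)⁻¹ * ∑ t, ∑ j, a t j ^ (m:ℝ) := by
        rw [← Finset.mul_sum, Finset.sum_comm]
    _ ≤ (m:ℝ)⁻¹ * ∑ _t : ι, (n : ℝ) ^ (1 - (m:ℝ)/p) := by
        have : ∑ t, ∑ j, a t j ^ (m:ℝ) ≤ ∑ _t : ι, (n : ℝ) ^ (1 - (m:ℝ)/p) :=
          Finset.sum_le_sum fun t _ => step2 t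
        exact mul_le_mul_of_nonneg_left this (by positivity)
    _ = (n : ℝ) ^ (1 - (m:ℝ)/p) := by
        rw [Finset.sum_const, Finset.card_univ, ← hm, nsmul_eq_mul, ← mul_assoc,
          inv_mul_cancel₀ hmR.ne', one_mul]

lemma diag_unit_bound {𝕂 : Type*} [RCLike 𝕂] {ι : Type*} [Fintype ι] [Nonempty ι] (n : ℕ)
    (p : ℝ) (hp : (Fintype.card ι : ℝ) < p) [Fact (1 ≤ ENNReal.ofReal p)]
    (y : ι → PiLp (ENNReal.ofReal p) (fun _ : Fin n => 𝕂)) (hy : ∀ t, ‖y t‖ ≤ 1) :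
    ‖diagMap 𝕂 n (ENNReal.ofReal p) y‖ ≤ (n : ℝ) ^ (1 - (Fintype.card ι : ℝ) / p) := by
  have hp0 : (0:ℝ) < p := lt_of_le_of_lt (Nat.cast_nonneg _) hp
  have htr : (ENNReal.ofReal p).toReal = p := ENNReal.toReal_ofReal hp0.le
  set a : ι → Fin n → ℝ := fun t j => ‖(WithLp.equiv (ENNReal.ofReal p) (Fin n → 𝕂)) (y t) j‖
    with ha'
  have key : ∀ t, ∑ j, a t j ^ p ≤ 1 := by
    intro t
    have hnorm : ‖y t‖ = (∑ j, a t j ^ p) ^ (1 / p) := by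
      rw [PiLp.norm_eq_sum (by rw [htr]; exact hp0)]
      simp [htr, ha']
    have h1 : (∑ j, a t j ^ p) ^ (1 / p) ≤ 1 := hnorm ▸ hy t
    have hS : (0:ℝ) ≤ ∑ j, a t j ^ p :=
      Finset.sum_nonneg fun j _ => Real.rpow_nonneg (norm_nonneg _) _
    calc ∑ j, a t j ^ p = ((∑ j, a t j ^ p) ^ (1/p)) ^ p := by
          rw [← Real.rpow_mul hS, one_div, inv_mul_cancel₀ hp0.ne', Real.rpow_one]
      _ ≤ 1 := Real.rpow_le_one (Real.rpow_nonneg hS _) h1 hp0.le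
  calc ‖diagMap 𝕂 n (ENNReal.ofReal p) y‖
      ≤ ∑ j, ∏ t, a t j := by
        rw [diagMap_apply]
        refine (norm_sum_le _ _).trans (Finset.sum_le_sum fun j _ => ?_)
        rw [norm_prod]
    _ ≤ (n : ℝ) ^ (1 - (Fintype.card ι : ℝ) / p) :=
        aux1' n a (fun t j => norm_nonneg _) p hp key

open Classical in
lemma diag_coeff {𝕂 : Type*} [RCLike 𝕂] (k n : ℕ) (hk : 0 < k) (ν : Fin k → ℕ)
    (hν : ∀ j, 0 < ν j) (q : ENNReal) (i : Fin k → Fin n) :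
    diagMap 𝕂 n q (fun t : (Σ j : Fin k, Fin (ν j)) =>
        (WithLp.equiv q (Fin n → 𝕂)).symm (Pi.single (i t.1) 1))
      = if ∃ c, i = Function.const (Fin k) c then 1 else 0 := by
  rw [diagMap_apply]
  have step : ∀ j : Fin n,
      (∏ t : (Σ j : Fin k, Fin (ν j)), (WithLp.equiv q (Fin n → 𝕂))
          ((WithLp.equiv q (Fin n → 𝕂)).symm (Pi.single (i t.1) (1:𝕂))) j)
        = if i = Function.const (Fin k) j then 1 else 0 := by
    intro j
    have : ∀ t : (Σ j : Fin k, Fin (ν j)), (WithLp.equiv q (Fin n → 𝕂))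
        ((WithLp.equiv q (Fin n → 𝕂)).symm (Pi.single (i t.1) (1:𝕂))) j
        = if j = i t.1 then 1 else 0 := by
      intro t
      rw [Equiv.apply_symm_apply, Pi.single_apply]
    rw [Finset.prod_congr rfl fun t _ => this t]
    by_cases hC : i = Function.const (Fin k) j
    · rw [if_pos hC]
      refine Finset.prod_eq_one fun t _ => ?_
      rw [if_pos (by rw [hC]; rfl)]
    · rw [if_neg hC]
      have : ∃ a : Fin k, i a ≠ j := by
        by_contra hcon
        push_neg at hcon
        exact hC (funext fun a => hcon a)
      obtain ⟨a, haj⟩ := this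
      exact Finset.prod_eq_zero (Finset.mem_univ (⟨a, ⟨0, hν a⟩⟩ : Σ j : Fin k, Fin (ν j)))
        (by rw [if_neg (Ne.symm haj)])
  rw [Finset.sum_congr rfl fun j _ => step j]
  by_cases hconst : ∃ c, i = Function.const (Fin k) c
  · obtain ⟨c, rfl⟩ := hconst
    rw [if_pos ⟨c, rfl⟩]
    have hinj : ∀ j : Fin n, Function.const (Fin k) c = Function.const (Fin k) j ↔ c = j := by
      intro j
      constructor
      · intro h
        exact congrFun h ⟨0, hk⟩
      · rintro rfl; rfl
    rw [Finset.sum_congr rfl fun j _ => by rw [if_congr (hinj j) rfl rfl]]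
    simp
  · rw [if_neg hconst]
    refine Finset.sum_eq_zero fun j _ => ?_
    rw [if_neg fun h => hconst ⟨j, h⟩]

open Classical in
lemma const_count (k n : ℕ) (hk : 0 < k) :
    ∑ i : Fin k → Fin n, (if ∃ c, i = Function.const (Fin k) c then (1:ℝ) else 0) = n := by
  have key : ∀ i : Fin k → Fin n, (if ∃ c, i = Function.const (Fin k) c then (1:ℝ) else 0)
      = ∑ c : Fin n, if i = Function.const (Fin k) c then (1:ℝ) else 0 := by
    intro i
    by_cases hconst : ∃ c, i = Function.const (Fin k) c
    · obtain ⟨c, rfl⟩ := hconst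
      rw [if_pos ⟨c, rfl⟩]
      have hinj : ∀ j : Fin n, Function.const (Fin k) c = Function.const (Fin k) j ↔ c = j :=
        fun j => ⟨fun h => congrFun h ⟨0, hk⟩, fun h => by rw [h]⟩
      rw [Finset.sum_congr rfl fun j _ => by rw [if_congr (hinj j) rfl rfl]]
      simp
    · rw [if_neg hconst]
      exact (Finset.sum_eq_zero fun j _ => by rw [if_neg fun h => hconst ⟨j, h⟩]).symm
  rw [Finset.sum_congr rfl fun i _ => key i, Finset.sum_comm]
  have : ∀ c : Fin n, ∑ i : Fin k → Fin n,
      (if i = Function.const (Fin k) c then (1:ℝ) else 0) = 1 := by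
    intro c
    rw [Finset.sum_ite_eq' Finset.univ (Function.const (Fin k) c) (fun _ => (1:ℝ))]
    simp
  rw [Finset.sum_congr rfl fun c _ => this c]
  simp


/-- **Optimality of the exponent of `n` in part (b) of the main theorem.**
For `r ∈ (0,∞)` and `m < p ≤ 2m`: if `s ≥ 0` and `D ≥ 1` are such that
`(∑_{i₁,…,i_k=1}^n |T(e_{i₁}^{n₁}, …, e_{i_k}^{n_k})|^r)^{1/r} ≤ D ⬝ n^s ⬝ ‖T‖`
for every `n ≥ 1` and every `m`-linear form `T : ℓ_p^n × ⋯ × ℓ_p^n → 𝕂`, then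
`s ≥ max{(p - rp + rm)/(pr), 0}`. -/
theorem stmt9 (𝕂 : Type*) [RCLike 𝕂] (m k : ℕ) (hk : 1 ≤ k) (hkm : k ≤ m)
    (ν : Fin k → ℕ) (hν : ∀ j, 0 < ν j) (hsum : ∑ j, ν j = m)
    (r : ℝ) (hr : 0 < r) (p : ℝ) (hmp : (m : ℝ) < p) (hp2 : p ≤ 2 * m)
    (s : ℝ) (hs : 0 ≤ s) (D : ℝ) (hD : 1 ≤ D)
    (hineq : ∀ n : ℕ, 0 < n →
      haveI : Fact (1 ≤ ENNReal.ofReal p) := ⟨ENNReal.one_le_ofReal.mpr (by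
        have h1 : (1 : ℝ) ≤ (m : ℝ) := by exact_mod_cast hk.trans hkm
        linarith)⟩
      ∀ T : ContinuousMultilinearMap 𝕂
          (fun _ : (Σ j : Fin k, Fin (ν j)) => PiLp (ENNReal.ofReal p) (fun _ : Fin n => 𝕂)) 𝕂,
        (∑ i : Fin k → Fin n,
            ‖T (fun t => (WithLp.equiv (ENNReal.ofReal p) (Fin n → 𝕂)).symm
                (Pi.single (i t.1) 1))‖ ^ r) ^ (1 / r)
          ≤ D * (n : ℝ) ^ s * ‖T‖) :
    max ((p - r * p + r * m) / (p * r)) 0 ≤ s := by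

  classical
  haveI : Fact (1 ≤ ENNReal.ofReal p) := ⟨ENNReal.one_le_ofReal.mpr (by
    have h1 : (1 : ℝ) ≤ (m : ℝ) := by exact_mod_cast hk.trans hkm
    linarith)⟩
  have hm1 : (1:ℝ) ≤ (m:ℝ) := by exact_mod_cast hk.trans hkm
  have hp0 : (0:ℝ) < p := by linarith
  haveI hne : Nonempty (Σ j : Fin k, Fin (ν j)) := ⟨⟨⟨0, hk⟩, ⟨0, hν _⟩⟩⟩
  have hcard : Fintype.card (Σ j : Fin k, Fin (ν j)) = m := by
    rw [Fintype.card_sigma]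
    simpa using hsum
  have hcardp : (Fintype.card (Σ j : Fin k, Fin (ν j)) : ℝ) < p := by rw [hcard]; exact hmp
  set q : ENNReal := ENNReal.ofReal p with hq
  -- the key inequality for each n
  have key : ∀ n : ℕ, 0 < n → (n:ℝ) ^ (1/r) ≤ D * (n:ℝ) ^ s * (n:ℝ) ^ (1 - (m:ℝ)/p) := by
    intro n hn
    set C : ℝ := (n:ℝ) ^ (1 - (m:ℝ)/p) with hCdef
    have hC : 0 ≤ C := Real.rpow_nonneg (Nat.cast_nonneg n) _
    have hb : ∀ x : (Σ j : Fin k, Fin (ν j)) → PiLp q (fun _ : Fin n => 𝕂),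
        ‖diagMap 𝕂 n q x‖ ≤ C * ∏ t, ‖x t‖ := by
      refine norm_multilinear_le_of_unit _ hC fun y hy => ?_
      have := diag_unit_bound n p hcardp y hy
      rwa [hcard] at this
    set T : ContinuousMultilinearMap 𝕂
        (fun _ : (Σ j : Fin k, Fin (ν j)) => PiLp q (fun _ : Fin n => 𝕂)) 𝕂 :=
      (diagMap 𝕂 n q).mkContinuous C hb with hT
    have hTnorm : ‖T‖ ≤ C := (diagMap 𝕂 n q).mkContinuous_norm_le hC hb
    have happ := hineq n hn T
    have hcoe : ∀ i : Fin k → Fin n,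
        ‖T (fun t => (WithLp.equiv q (Fin n → 𝕂)).symm (Pi.single (i t.1) 1))‖ ^ r
          = if ∃ c, i = Function.const (Fin k) c then (1:ℝ) else 0 := by
      intro i
      have : T (fun t => (WithLp.equiv q (Fin n → 𝕂)).symm (Pi.single (i t.1) 1))
          = diagMap 𝕂 n q (fun t : (Σ j : Fin k, Fin (ν j)) =>
              (WithLp.equiv q (Fin n → 𝕂)).symm (Pi.single (i t.1) 1)) :=
        rfl
      rw [this, diag_coeff k n hk ν hν q i]
      split_ifs
      · simp
      · simp [Real.zero_rpow hr.ne']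
    rw [Finset.sum_congr rfl fun i _ => hcoe i, const_count k n hk] at happ
    calc (n:ℝ) ^ (1/r) ≤ D * (n:ℝ) ^ s * ‖T‖ := happ
      _ ≤ D * (n:ℝ) ^ s * C := by
          refine mul_le_mul_of_nonneg_left hTnorm ?_
          have : (0:ℝ) ≤ (n:ℝ) ^ s := Real.rpow_nonneg (Nat.cast_nonneg n) _
          nlinarith
  -- deduce the exponent inequality
  set t : ℝ := 1/r - s - (1 - (m:ℝ)/p) with htdef
  have hbound : ∀ n : ℕ, 0 < n → (n:ℝ) ^ t ≤ D := by
    intro n hn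
    have hnpos : (0:ℝ) < (n:ℝ) := by exact_mod_cast hn
    have h1 := key n hn
    have h2 : (n:ℝ) ^ s * (n:ℝ) ^ (1 - (m:ℝ)/p) = (n:ℝ) ^ (s + (1 - (m:ℝ)/p)) :=
      (Real.rpow_add hnpos _ _).symm
    have h3 : (n:ℝ) ^ t * (n:ℝ) ^ (s + (1 - (m:ℝ)/p)) = (n:ℝ) ^ (1/r) := by
      rw [← Real.rpow_add hnpos]
      congr 1
      rw [htdef]; ring
    have hpos : (0:ℝ) < (n:ℝ) ^ (s + (1 - (m:ℝ)/p)) := Real.rpow_pos_of_pos hnpos _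
    rw [← h3, mul_assoc, h2] at h1
    calc (n:ℝ) ^ t = (n:ℝ) ^ t * (n:ℝ) ^ (s + (1 - (m:ℝ)/p)) / (n:ℝ) ^ (s + (1 - (m:ℝ)/p)) := by
          field_simp
      _ ≤ D * (n:ℝ) ^ (s + (1 - (m:ℝ)/p)) / (n:ℝ) ^ (s + (1 - (m:ℝ)/p)) := by gcongr
      _ = D := by field_simp
  have ht0 : t ≤ 0 := by
    by_contra hcon
    push_neg at hcon
    have htend : Filter.Tendsto (fun n : ℕ => (n:ℝ) ^ t) Filter.atTop Filter.atTop :=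
      (tendsto_rpow_atTop hcon).comp tendsto_natCast_atTop_atTop
    obtain ⟨n, hn1, hn2⟩ := ((htend.eventually_gt_atTop D).and
      (Filter.eventually_ge_atTop 1)).exists
    exact absurd (hbound n hn2) (not_le.2 hn1)
  have heq : (p - r * p + r * m) / (p * r) = 1/r - 1 + (m:ℝ)/p := by
    field_simp
  refine max_le ?_ hs
  rw [heq]
  rw [htdef] at ht0
  linarith
end

section
/- Let 𝕂 be ℝ or ℂ, let m ≥ k ≥ 1 be integers, let p > m be a real number, and let n_1, …, n_k be positive integers with n_1 + ⋯ + n_k = m. Set r_j = p/n_j for j = 1, …, k. Then for every positive integer n and every k-linear form A : ℓ_{r_1}^n × ⋯ × ℓ_{r_k}^n → 𝕂 there exists an m-linear form T : ℓ_p^n × ⋯ × ℓ_p^n → 𝕂 such that T(e_{i_1}^{n_1}, …, e_{i_k}^{n_k}) = A(e_{i_1}, …, e_{i_k}) for all indices i_1, …, i_k ∈ {1, …, n}, and ‖T‖ ≤ ‖A‖. -/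
open Finset MeasureTheory ENNReal NNReal

private lemma holder_sum {ι α : Type*} [Fintype ι] [Fintype α] (f : ι → α → ℝ≥0∞)
    {w : ι → ℝ} (hw : ∀ i, 0 ≤ w i) (hw1 : ∑ i, w i = 1) :
    ∑ a, ∏ i, f i a ^ w i ≤ ∏ i, (∑ a, f i a) ^ w i := by
  letI : MeasurableSpace α := ⊤
  haveI : DiscreteMeasurableSpace α := ⟨fun _ => MeasurableSpace.measurableSet_top⟩
  have h := ENNReal.lintegral_prod_norm_pow_le (μ := Measure.count) Finset.univ
    (f := f) (fun i _ => (Measurable.of_discrete (f := f i)).aemeasurable) hw1 (fun i _ => hw i)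
  simpa [MeasureTheory.lintegral_count, tsum_fintype] using h

private lemma holder_nnreal {α : Type*} [Fintype α] {ν : ℕ} (hν : 0 < ν) {p : ℝ} (hp : 0 < p)
    (f : Fin ν → α → ℝ≥0) :
    (∑ i, ∏ l, f l i ^ (p / ν)) ^ (ν / p) ≤ ∏ l, (∑ i, f l i ^ p) ^ (1 / p) := by
  have hν' : (0:ℝ) < ν := by exact_mod_cast hν
  have hw1 : ∑ _l : Fin ν, (ν:ℝ)⁻¹ = 1 := by
    simp [Finset.sum_const, mul_inv_cancel₀ hν'.ne']
  have h := holder_sum (fun l a => (f l a : ℝ≥0∞) ^ p) (fun _ => by positivity) hw1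
  have h2 : (∑ a, ∏ l, (f l a : ℝ≥0∞) ^ (p / ν)) ^ (ν / p)
      ≤ ∏ l, ((∑ a, (f l a : ℝ≥0∞) ^ p) ^ (1 / p)) := by
    have h' : ∑ a, ∏ l, (f l a : ℝ≥0∞) ^ (p / ν)
        ≤ ∏ l, (∑ a, (f l a : ℝ≥0∞) ^ p) ^ (ν:ℝ)⁻¹ := by
      simpa [← ENNReal.rpow_mul, div_eq_mul_inv] using h
    calc (∑ a, ∏ l, (f l a : ℝ≥0∞) ^ (p / ν)) ^ (ν / p)
        ≤ (∏ l, (∑ a, (f l a : ℝ≥0∞) ^ p) ^ (ν:ℝ)⁻¹) ^ (ν / p) :=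
          ENNReal.rpow_le_rpow h' (by positivity)
      _ = ∏ l, ((∑ a, (f l a : ℝ≥0∞) ^ p) ^ (1 / p)) := by
          rw [← ENNReal.prod_rpow_of_nonneg (by positivity)]
          refine Finset.prod_congr rfl fun l _ => ?_
          rw [← ENNReal.rpow_mul]
          congr 1
          field_simp
  rw [← ENNReal.coe_le_coe]
  push_cast [ENNReal.coe_rpow_of_nonneg _ (by positivity : (0:ℝ) ≤ ν / p),
    ENNReal.coe_rpow_of_nonneg _ (by positivity : (0:ℝ) ≤ p / ν),
    ENNReal.coe_rpow_of_nonneg _ (by positivity : (0:ℝ) ≤ 1 / p),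
    ENNReal.coe_rpow_of_nonneg _ hp.le]
  exact h2

private lemma vnorm_le {𝕂 : Type*} [RCLike 𝕂] {n νj : ℕ} (hνj : 0 < νj) {p : ℝ} (hp : 0 < p)
    [Fact (1 ≤ ENNReal.ofReal p)] [Fact (1 ≤ ENNReal.ofReal (p / νj))]
    (x : Fin νj → PiLp (ENNReal.ofReal p) (fun _ : Fin n => 𝕂)) :
    ‖(WithLp.equiv (ENNReal.ofReal (p / νj)) (Fin n → 𝕂)).symm (fun i => ∏ l, x l i)‖
      ≤ ∏ l, ‖x l‖ := by
  have hν' : (0:ℝ) < νj := by exact_mod_cast hνj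
  have hr : (0:ℝ) < p / νj := by positivity
  have h1 : (ENNReal.ofReal (p / νj)).toReal = p / νj := ENNReal.toReal_ofReal hr.le
  have h2 : (ENNReal.ofReal p).toReal = p := ENNReal.toReal_ofReal hp.le
  have key := holder_nnreal (α := Fin n) hνj hp (fun l i => ‖x l i‖₊)
  rw [← NNReal.coe_le_coe] at key
  push_cast at key
  rw [PiLp.norm_eq_sum (by rw [h1]; exact hr)]
  have hxl : ∀ l, ‖x l‖ = (∑ i, ‖x l i‖ ^ p) ^ (1 / p) := fun l => by
    rw [PiLp.norm_eq_sum (by rw [h2]; exact hp), h2]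
  calc (∑ i, ‖(WithLp.equiv (ENNReal.ofReal (p / νj)) (Fin n → 𝕂)).symm (fun i => ∏ l, x l i) i‖
          ^ (ENNReal.ofReal (p / νj)).toReal) ^ (1 / (ENNReal.ofReal (p / νj)).toReal)
      = (∑ i, ∏ l, ‖x l i‖ ^ (p / νj)) ^ (νj / p) := by
        rw [h1]
        congr 1
        · refine Finset.sum_congr rfl fun i _ => ?_
          rw [WithLp.equiv_symm_apply, PiLp.toLp_apply, norm_prod,
            ← Real.finset_prod_rpow _ _ (fun l _ => norm_nonneg _)]
        · rw [one_div, inv_div]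
    _ ≤ ∏ l, (∑ i, ‖x l i‖ ^ p) ^ (1 / p) := key
    _ = ∏ l, ‖x l‖ := by rw [Finset.prod_congr rfl fun l _ => (hxl l).symm]

/-- **Lifting of `k`-linear forms to block `m`-linear forms.** Let `p > m` and
`r_j = p / n_j`. Every `k`-linear form `A : ℓ_{r₁}^n × ⋯ × ℓ_{r_k}^n → 𝕂` admits an
`m`-linear form `T : ℓ_p^n × ⋯ × ℓ_p^n → 𝕂` with
`T(e_{i₁}^{n₁}, …, e_{i_k}^{n_k}) = A(e_{i₁}, …, e_{i_k})` for all indices and `‖T‖ ≤ ‖A‖`. -/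
theorem stmt10 (𝕂 : Type*) [RCLike 𝕂] (m k : ℕ) (hk : 1 ≤ k) (hkm : k ≤ m)
    (p : ℝ) (hmp : (m : ℝ) < p)
    (ν : Fin k → ℕ) (hν : ∀ j, 0 < ν j) (hsum : ∑ j, ν j = m) :
    ∀ n : ℕ, 0 < n →
      haveI : Fact (1 ≤ ENNReal.ofReal p) := ⟨ENNReal.one_le_ofReal.mpr (by
        have h1 : (1 : ℝ) ≤ (m : ℝ) := by exact_mod_cast hk.trans hkm
        linarith)⟩
      haveI : ∀ j : Fin k, Fact (1 ≤ ENNReal.ofReal (p / ν j)) := fun j =>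
        ⟨ENNReal.one_le_ofReal.mpr (by
          have h1 : (ν j : ℝ) ≤ m := by
            exact_mod_cast hsum ▸
              Finset.single_le_sum (f := fun i => ν i) (fun i _ => Nat.zero_le _)
                (Finset.mem_univ j)
          have h2 : (0 : ℝ) < ν j := by exact_mod_cast hν j
          rw [le_div_iff₀ h2]; linarith)⟩
      ∀ A : ContinuousMultilinearMap 𝕂
          (fun j : Fin k => PiLp (ENNReal.ofReal (p / ν j)) (fun _ : Fin n => 𝕂)) 𝕂,
        ∃ T : ContinuousMultilinearMap 𝕂
            (fun _ : (Σ j : Fin k, Fin (ν j)) => PiLp (ENNReal.ofReal p) (fun _ : Fin n => 𝕂)) 𝕂,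
          (∀ i : Fin k → Fin n,
            T (fun s => (WithLp.equiv (ENNReal.ofReal p) (Fin n → 𝕂)).symm
                (Pi.single (i s.1) 1)) =
              A (fun j => (WithLp.equiv (ENNReal.ofReal (p / ν j)) (Fin n → 𝕂)).symm
                (Pi.single (i j) 1))) ∧
          ‖T‖ ≤ ‖A‖ := by
  have hp0 : (0:ℝ) < p := lt_of_le_of_lt (by positivity) hmp
  haveI hPfact : Fact (1 ≤ ENNReal.ofReal p) := ⟨ENNReal.one_le_ofReal.mpr (by
    have h1 : (1 : ℝ) ≤ (m : ℝ) := by exact_mod_cast hk.trans hkm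
    linarith)⟩
  haveI hRfact : ∀ j : Fin k, Fact (1 ≤ ENNReal.ofReal (p / ν j)) := fun j =>
    ⟨ENNReal.one_le_ofReal.mpr (by
      have h1 : (ν j : ℝ) ≤ m := by
        exact_mod_cast hsum ▸
          Finset.single_le_sum (f := fun i => ν i) (fun i _ => Nat.zero_le _)
            (Finset.mem_univ j)
      have h2 : (0 : ℝ) < ν j := by exact_mod_cast hν j
      rw [le_div_iff₀ h2]; linarith)⟩
  intro n hn A
  classical
  -- the block product multilinear maps
  let V : ∀ j : Fin k, MultilinearMap 𝕂
      (fun _ : Fin (ν j) => PiLp (ENNReal.ofReal p) (fun _ : Fin n => 𝕂))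
      (PiLp (ENNReal.ofReal (p / ν j)) (fun _ : Fin n => 𝕂)) := fun j =>
    ((WithLp.linearEquiv (ENNReal.ofReal (p / ν j)) 𝕂 (Fin n → 𝕂)).symm.toLinearMap).compMultilinearMap
      (MultilinearMap.pi (fun i : Fin n =>
        (MultilinearMap.mkPiAlgebra 𝕂 (Fin (ν j)) 𝕂).compLinearMap
          (fun _ : Fin (ν j) =>
            (LinearMap.proj i).comp
              (WithLp.linearEquiv (ENNReal.ofReal p) 𝕂 (Fin n → 𝕂)).toLinearMap)))
  have hVapply : ∀ (j : Fin k) (y : Fin (ν j) → PiLp (ENNReal.ofReal p) (fun _ : Fin n => 𝕂)),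
      V j y = (WithLp.equiv (ENNReal.ofReal (p / ν j)) (Fin n → 𝕂)).symm
        (fun i => ∏ l, y l i) := by
    intro j y
    rfl
  -- commuting update through the sigma reindexing
  have hcomp : ∀ (dec : DecidableEq (Σ j : Fin k, Fin (ν j)))
      (x : ∀ _ : (Σ j : Fin k, Fin (ν j)), PiLp (ENNReal.ofReal p) (fun _ : Fin n => 𝕂))
      (j0 : Fin k) (l0 : Fin (ν j0)) (c : PiLp (ENNReal.ofReal p) (fun _ : Fin n => 𝕂)),
      (fun j => V j (fun l => @Function.update _ _ dec x ⟨j0, l0⟩ c ⟨j, l⟩))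
        = Function.update (fun j => V j (fun l => x ⟨j, l⟩)) j0
            (V j0 (Function.update (fun l => x ⟨j0, l⟩) l0 c)) := by
    intro dec x j0 l0 c
    funext j
    rcases eq_or_ne j j0 with rfl | hj
    · rw [Function.update_self]
      congr 1
      funext l
      rcases eq_or_ne l l0 with rfl | hl
      · rw [Function.update_self, Function.update_self]
      · rw [Function.update_of_ne hl, Function.update_of_ne (by simp [hl])]
    · rw [Function.update_of_ne hj]
      congr 1
      funext l
      exact Function.update_of_ne (fun h => hj (congrArg Sigma.fst h)) _ _
  let T₀ : MultilinearMap 𝕂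
      (fun _ : (Σ j : Fin k, Fin (ν j)) => PiLp (ENNReal.ofReal p) (fun _ : Fin n => 𝕂)) 𝕂 :=
    { toFun := fun x => A (fun j => V j (fun l => x ⟨j, l⟩))
      map_update_add' := by
        intro dec x s0 a b
        obtain ⟨j0, l0⟩ := s0
        rw [hcomp dec x j0 l0 (a + b), hcomp dec x j0 l0 a, hcomp dec x j0 l0 b,
          (V j0).map_update_add, A.map_update_add]
      map_update_smul' := by
        intro dec x s0 c a
        obtain ⟨j0, l0⟩ := s0
        rw [hcomp dec x j0 l0 (c • a), hcomp dec x j0 l0 a,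
          (V j0).map_update_smul, A.map_update_smul] }
  have hbound : ∀ x, ‖T₀ x‖ ≤ ‖A‖ * ∏ s : (Σ j : Fin k, Fin (ν j)), ‖x s‖ := by
    intro x
    calc ‖A (fun j => V j (fun l => x ⟨j, l⟩))‖
        ≤ ‖A‖ * ∏ j, ‖V j (fun l => x ⟨j, l⟩)‖ := A.le_opNorm _
      _ ≤ ‖A‖ * ∏ j, ∏ l, ‖x ⟨j, l⟩‖ := by
          refine mul_le_mul_of_nonneg_left (Finset.prod_le_prod (fun j _ => norm_nonneg _)
            (fun j _ => ?_)) (norm_nonneg A)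
          rw [hVapply]
          exact vnorm_le (hν j) hp0 _
      _ = ‖A‖ * ∏ s : (Σ j : Fin k, Fin (ν j)), ‖x s‖ := by
          rw [← Finset.univ_sigma_univ, Finset.prod_sigma]
  refine ⟨T₀.mkContinuous ‖A‖ hbound, ?_, MultilinearMap.mkContinuous_norm_le _ (norm_nonneg A) _⟩
  intro i
  rw [MultilinearMap.coe_mkContinuous]
  show A (fun j => V j (fun l => (WithLp.equiv (ENNReal.ofReal p) (Fin n → 𝕂)).symm
      (Pi.single (i (⟨j, l⟩ : Σ j : Fin k, Fin (ν j)).1) 1))) = _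
  congr 1
  funext j
  rw [hVapply]
  congr 1
  funext i'
  simp only [WithLp.equiv_symm_apply, PiLp.toLp_apply, Finset.prod_const, Finset.card_univ, Fintype.card_fin]
  rcases eq_or_ne i' (i j) with rfl | hi
  · simp
  · simp [Pi.single_eq_of_ne hi, hi, zero_pow (hν j).ne']
end

section
/- (Kahane–Salem–Zygmund inequality, in the form used in the paper.) Let 𝕂 be ℝ or ℂ and let k be a positive integer. There is a constant C_k > 0 such that: for all r_1, …, r_k ∈ [2, ∞) and every positive integer n there exists a k-linear form A : ℓ_{r_1}^n × ⋯ × ℓ_{r_k}^n → 𝕂 whose coefficients satisfy A(e_{i_1}, …, e_{i_k}) ∈ {−1, +1} for all i_1, …, i_k ∈ {1, …, n}, and such that ‖A‖ ≤ C_k · n^{(k+1)/2 − (1/r_1 + ⋯ + 1/r_k)}. -/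
open Finset Real Metric MeasureTheory Module
open scoped ENNReal NNReal

section KSZhelpers


lemma KSZ.hoeffding_count {I : Type*} [Fintype I] [DecidableEq I] (a : I → ℝ)
    (ha : ∑ i, a i ^ 2 ≤ 1) {t : ℝ} (ht : 0 ≤ t) :
    ((Finset.univ.filter
        (fun f : I → Bool => t ≤ ∑ i, (if f i then (1:ℝ) else -1) * a i)).card : ℝ)
      ≤ 2 ^ (Fintype.card I) * Real.exp (-(t ^ 2) / 2) := by
  set N := Fintype.card I
  set S : (I → Bool) → ℝ := fun f => ∑ i, (if f i then (1:ℝ) else -1) * a i with hS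
  have key : ((Finset.univ.filter (fun f : I → Bool => t ≤ S f)).card : ℝ) * Real.exp (t * t)
      ≤ 2 ^ N * Real.exp (t ^ 2 / 2) := by
    have expand : ∑ f : I → Bool, ∏ i, Real.exp (t * ((if f i then (1:ℝ) else -1) * a i))
        = ∏ i, ∑ b : Bool, Real.exp (t * ((if b then (1:ℝ) else -1) * a i)) := by
      have h := Finset.sum_prod_piFinset (Finset.univ : Finset Bool)
        (fun i b => Real.exp (t * ((if b then (1:ℝ) else -1) * a i)))
      rwa [Fintype.piFinset_univ] at h
    calc ((Finset.univ.filter (fun f : I → Bool => t ≤ S f)).card : ℝ) * Real.exp (t * t)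
        = ∑ _f ∈ Finset.univ.filter (fun f : I → Bool => t ≤ S f), Real.exp (t * t) := by
          rw [Finset.sum_const, nsmul_eq_mul]
      _ ≤ ∑ f ∈ Finset.univ.filter (fun f : I → Bool => t ≤ S f), Real.exp (t * S f) := by
          apply Finset.sum_le_sum
          intro f hf
          rw [Finset.mem_filter] at hf
          exact Real.exp_le_exp.2 (mul_le_mul_of_nonneg_left hf.2 ht)
      _ ≤ ∑ f : I → Bool, Real.exp (t * S f) := by
          apply Finset.sum_le_sum_of_subset_of_nonneg (Finset.filter_subset _ _)
          intro f _ _; positivity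
      _ = ∑ f : I → Bool, ∏ i, Real.exp (t * ((if f i then (1:ℝ) else -1) * a i)) := by
          apply Finset.sum_congr rfl
          intro f _
          rw [hS, ← Real.exp_sum, Finset.mul_sum]
      _ = ∏ i, ∑ b : Bool, Real.exp (t * ((if b then (1:ℝ) else -1) * a i)) := expand
      _ = ∏ i, (Real.exp (t * a i) + Real.exp (-(t * a i))) := by
          apply Finset.prod_congr rfl
          intro i _
          rw [Fintype.sum_bool]
          have e1 : t * ((1:ℝ) * a i) = t * a i := by ring
          have e2 : t * ((-1:ℝ) * a i) = -(t * a i) := by ring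
          simp only [if_true, Bool.false_eq_true, if_false, e1, e2]
      _ ≤ ∏ i, (2 * Real.exp ((t * a i) ^ 2 / 2)) := by
          apply Finset.prod_le_prod
          · intro i _; positivity
          · intro i _
            have h1 := Real.cosh_le_exp_half_sq (t * a i)
            rw [Real.cosh_eq] at h1
            linarith
      _ = 2 ^ N * Real.exp (∑ i, (t * a i) ^ 2 / 2) := by
          rw [Finset.prod_mul_distrib, Finset.prod_const, Real.exp_sum]
          rfl
      _ ≤ 2 ^ N * Real.exp (t ^ 2 / 2) := by
          apply mul_le_mul_of_nonneg_left _ (by positivity)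
          apply Real.exp_le_exp.2
          have h2 : ∑ i, (t * a i) ^ 2 / 2 = t ^ 2 / 2 * ∑ i, a i ^ 2 := by
            rw [Finset.mul_sum]; apply Finset.sum_congr rfl; intro i _; ring
          rw [h2]
          nlinarith [sq_nonneg t]
  have hpos : (0:ℝ) < Real.exp (t * t) := Real.exp_pos _
  have h3 : ((Finset.univ.filter (fun f : I → Bool => t ≤ S f)).card : ℝ)
      ≤ 2 ^ N * Real.exp (t ^ 2 / 2) / Real.exp (t * t) := by
    rw [le_div_iff₀ hpos]; exact key
  calc ((Finset.univ.filter (fun f : I → Bool => t ≤ S f)).card : ℝ)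
      ≤ 2 ^ N * Real.exp (t ^ 2 / 2) / Real.exp (t * t) := h3
    _ = 2 ^ N * Real.exp (-(t ^ 2) / 2) := by
        rw [mul_div_assoc, ← Real.exp_sub]
        ring_nf


lemma KSZ.exists_net (E : Type*) [NormedAddCommGroup E] [NormedSpace ℝ E]
    [FiniteDimensional ℝ E] [Nontrivial E] {δ : ℝ} (hδ : 0 < δ) :
    ∃ T : Finset E, (↑T ⊆ closedBall (0:E) 1) ∧
      ((T.card : ℝ) ≤ (1 + 2 / δ) ^ (finrank ℝ E)) ∧
      ∀ x ∈ closedBall (0:E) 1, ∃ y ∈ T, dist x y ≤ δ := by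
  classical
  borelize E
  set d := finrank ℝ E with hd
  set μ := (Module.finBasis ℝ E).addHaar with hμ
  have hμ0 : μ (ball (0:E) 1) ≠ 0 :=
    (measure_ball_pos μ 0 one_pos).ne'
  have hμtop : μ (ball (0:E) 1) ≠ ⊤ :=
    (measure_ball_lt_top).ne
  -- separated sets have bounded cardinality
  have count : ∀ S : Finset E, (↑S ⊆ closedBall (0:E) 1) →
      (∀ a ∈ S, ∀ b ∈ S, a ≠ b → δ < dist a b) → (S.card : ℝ) ≤ (1 + 2 / δ) ^ d := by
    intro S hSball hSsep
    have hdisj : (↑S : Set E).PairwiseDisjoint (fun s => ball s (δ / 2)) := by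
      intro a ha b hb hab
      apply Set.disjoint_left.2
      intro x hxa hxb
      rw [mem_ball] at hxa hxb
      have : dist a b ≤ δ := by
        calc dist a b ≤ dist a x + dist x b := dist_triangle _ _ _
          _ = dist x a + dist x b := by rw [dist_comm a x]
          _ ≤ δ / 2 + δ / 2 := add_le_add hxa.le hxb.le
          _ = δ := by ring
      exact absurd this (not_le.2 (hSsep a ha b hb hab))
    have hsub : (⋃ s ∈ S, ball s (δ / 2)) ⊆ ball (0:E) (1 + δ / 2) := by
      intro x hx
      simp only [Set.mem_iUnion] at hx
      obtain ⟨s, hs, hxs⟩ := hx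
      rw [mem_ball] at hxs ⊢
      have hs1 : dist s 0 ≤ 1 := mem_closedBall.1 (hSball hs)
      calc dist x 0 ≤ dist x s + dist s 0 := dist_triangle _ _ _
        _ < δ / 2 + 1 := add_lt_add_of_lt_of_le hxs hs1
        _ = 1 + δ / 2 := by ring
    have hmeas : μ (⋃ s ∈ S, ball s (δ / 2)) = ∑ s ∈ S, μ (ball s (δ / 2)) :=
      measure_biUnion_finset hdisj (fun s _ => measurableSet_ball)
    have hball : ∀ s : E, μ (ball s (δ / 2)) = ENNReal.ofReal ((δ / 2) ^ d) * μ (ball 0 1) :=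
      fun s => Measure.addHaar_ball μ s (by linarith)
    have hbig : μ (ball (0:E) (1 + δ / 2)) = ENNReal.ofReal ((1 + δ / 2) ^ d) * μ (ball 0 1) :=
      Measure.addHaar_ball μ 0 (by linarith)
    have hle : (S.card : ℝ≥0∞) * ENNReal.ofReal ((δ / 2) ^ d) * μ (ball 0 1)
        ≤ ENNReal.ofReal ((1 + δ / 2) ^ d) * μ (ball 0 1) := by
      calc (S.card : ℝ≥0∞) * ENNReal.ofReal ((δ / 2) ^ d) * μ (ball 0 1)
          = ∑ s ∈ S, μ (ball s (δ / 2)) := by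
            rw [Finset.sum_congr rfl (fun s _ => hball s), Finset.sum_const, nsmul_eq_mul,
              mul_assoc]
        _ = μ (⋃ s ∈ S, ball s (δ / 2)) := hmeas.symm
        _ ≤ μ (ball (0:E) (1 + δ / 2)) := measure_mono hsub
        _ = ENNReal.ofReal ((1 + δ / 2) ^ d) * μ (ball 0 1) := hbig
    have hle2 : (S.card : ℝ≥0∞) * ENNReal.ofReal ((δ / 2) ^ d)
        ≤ ENNReal.ofReal ((1 + δ / 2) ^ d) :=
      (ENNReal.mul_le_mul_iff_left hμ0 hμtop).1 hle
    have hcast : (S.card : ℝ≥0∞) = ENNReal.ofReal (S.card : ℝ) := by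
      simp
    rw [hcast, ← ENNReal.ofReal_mul (by positivity)] at hle2
    have hreal : (S.card : ℝ) * (δ / 2) ^ d ≤ (1 + δ / 2) ^ d :=
      (ENNReal.ofReal_le_ofReal_iff (by positivity)).1 hle2
    have hpos2 : (0:ℝ) < (δ / 2) ^ d := by positivity
    have h4 : (S.card : ℝ) ≤ (1 + δ / 2) ^ d / (δ / 2) ^ d := by
      rw [le_div_iff₀ hpos2]; exact hreal
    calc (S.card : ℝ) ≤ (1 + δ / 2) ^ d / (δ / 2) ^ d := h4
      _ = ((1 + δ / 2) / (δ / 2)) ^ d := (div_pow _ _ _).symm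
      _ = (1 + 2 / δ) ^ d := by
          congr 1
          field_simp
          ring
  -- maximal separated set
  set 𝒜 : Set ℕ := {m | ∃ S : Finset E, (↑S ⊆ closedBall (0:E) 1) ∧
      (∀ a ∈ S, ∀ b ∈ S, a ≠ b → δ < dist a b) ∧ S.card = m} with h𝒜
  have hne : (0:ℕ) ∈ 𝒜 := ⟨∅, by simp, by simp, by simp⟩
  have hbdd : BddAbove 𝒜 := by
    refine ⟨Nat.floor ((1 + 2 / δ) ^ d), ?_⟩
    rintro m ⟨S, h1, h2, rfl⟩
    exact Nat.le_floor (count S h1 h2)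
  obtain ⟨S, hS1, hS2, hS3⟩ := Nat.sSup_mem ⟨0, hne⟩ hbdd
  refine ⟨S, hS1, hS3 ▸ count S hS1 hS2, ?_⟩
  intro x hx
  by_contra hcon
  push_neg at hcon
  have hxS : x ∉ S := by
    intro hxS
    have := hcon x hxS
    simp at this
    linarith
  have hsep' : ∀ a ∈ insert x S, ∀ b ∈ insert x S, a ≠ b → δ < dist a b := by
    intro a ha b hb hab
    rcases Finset.mem_insert.1 ha with rfl | ha' <;>
      rcases Finset.mem_insert.1 hb with rfl | hb'
    · exact absurd rfl hab
    · exact hcon b hb'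
    · rw [dist_comm]; exact hcon a ha'
    · exact hS2 a ha' b hb' hab
  have hsub' : ↑(insert x S) ⊆ closedBall (0:E) 1 := by
    rw [Finset.coe_insert]
    exact Set.insert_subset hx hS1
  have hmem : S.card + 1 ∈ 𝒜 := by
    refine ⟨insert x S, hsub', hsep', ?_⟩
    rw [Finset.card_insert_of_notMem hxS]
  have := le_csSup hbdd hmem
  rw [hS3] at this
  omega


variable {𝕂 : Type*} [RCLike 𝕂]

noncomputable def KSZ.mk {n k : ℕ} (c : (Fin k → Fin n) → 𝕂) (p : Fin k → ℝ≥0∞) :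
    MultilinearMap 𝕂 (fun j : Fin k => PiLp (p j) (fun _ : Fin n => 𝕂)) 𝕂 :=
  ∑ i : Fin k → Fin n, c i •
    (MultilinearMap.mkPiAlgebra 𝕂 (Fin k) 𝕂).compLinearMap
      (fun j => (LinearMap.proj (i j)).comp (WithLp.linearEquiv (p j) 𝕂 (Fin n → 𝕂)).toLinearMap)

lemma KSZ.mk_apply {n k : ℕ} (c : (Fin k → Fin n) → 𝕂) (p : Fin k → ℝ≥0∞)
    (x : ∀ j : Fin k, PiLp (p j) (fun _ : Fin n => 𝕂)) :
    KSZ.mk c p x = ∑ i : Fin k → Fin n, c i * ∏ j, (WithLp.equiv (p j) (Fin n → 𝕂)) (x j) (i j) := by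
  simp [KSZ.mk, smul_eq_mul]


lemma KSZ.bound_of_ball_bound {k : ℕ} {E : Fin k → Type*} [∀ j, NormedAddCommGroup (E j)]
    [∀ j, NormedSpace 𝕂 (E j)] (B : MultilinearMap 𝕂 E 𝕂) {K : ℝ} (hK : 0 ≤ K)
    (h : ∀ x : ∀ j, E j, (∀ j, ‖x j‖ ≤ 1) → ‖B x‖ ≤ K) :
    ∀ x : ∀ j, E j, ‖B x‖ ≤ K * ∏ j, ‖x j‖ := by
  intro x
  by_cases hz : ∃ j, x j = 0
  · obtain ⟨j, hj⟩ := hz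
    rw [B.map_coord_zero j hj, norm_zero]
    positivity
  · push_neg at hz
    have hxpos : ∀ j, (0:ℝ) < ‖x j‖ := fun j => norm_pos_iff.2 (hz j)
    set c : Fin k → 𝕂 := fun j => ((‖x j‖⁻¹ : ℝ) : 𝕂) with hc
    have hmap := B.map_smul_univ c x
    have hnorm1 : ∀ j, ‖c j • x j‖ ≤ 1 := by
      intro j
      rw [norm_smul, hc]
      simp only [RCLike.norm_ofReal, abs_of_nonneg (inv_nonneg.2 (norm_nonneg (x j)))]
      rw [inv_mul_cancel₀ (hxpos j).ne']
    have hBu := h _ hnorm1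
    rw [hmap] at hBu
    have hprod : ‖(∏ j, c j) • B x‖ = (∏ j, ‖x j‖)⁻¹ * ‖B x‖ := by
      rw [norm_smul]
      congr 1
      rw [hc]
      have : (∏ j, (((‖x j‖⁻¹ : ℝ) : 𝕂))) = (((∏ j, ‖x j‖⁻¹ : ℝ)) : 𝕂) := by
        rw [RCLike.ofReal_prod]
      rw [this, RCLike.norm_ofReal, abs_of_nonneg (by positivity), ← Finset.prod_inv_distrib]
    rw [hprod] at hBu
    have hppos : (0:ℝ) < ∏ j, ‖x j‖ := Finset.prod_pos (fun j _ => hxpos j)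
    calc ‖B x‖ = ((∏ j, ‖x j‖)⁻¹ * ‖B x‖) * (∏ j, ‖x j‖) := by
          field_simp
      _ ≤ K * ∏ j, ‖x j‖ := mul_le_mul_of_nonneg_right hBu hppos.le

lemma KSZ.coord_le_norm {n : ℕ} (w : PiLp 2 (fun _ : Fin n => 𝕂)) (i : Fin n) :
    ‖w i‖ ≤ ‖w‖ := by
  have h := PiLp.norm_sq_eq_of_L2 (fun _ : Fin n => 𝕂) w
  have h1 : ‖w i‖ ^ 2 ≤ ‖w‖ ^ 2 := by
    rw [h]
    exact Finset.single_le_sum (f := fun i => ‖w i‖ ^ 2) (fun i _ => by positivity) (mem_univ i)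
  nlinarith [norm_nonneg (w i), norm_nonneg w]

lemma KSZ.l2_le_lp {n : ℕ} {p : ℝ} (hp : 2 ≤ p) [Fact (1 ≤ ENNReal.ofReal p)]
    (w : Fin n → 𝕂) :
    ‖(WithLp.equiv 2 (Fin n → 𝕂)).symm w‖
      ≤ (n:ℝ) ^ ((1:ℝ)/2 - 1/p) * ‖(WithLp.equiv (ENNReal.ofReal p) (Fin n → 𝕂)).symm w‖ := by
  have hp0 : (0:ℝ) < p := by linarith
  have htr : (ENNReal.ofReal p).toReal = p := ENNReal.toReal_ofReal hp0.le
  have hL2 : ‖(WithLp.equiv 2 (Fin n → 𝕂)).symm w‖ = (∑ i, ‖w i‖ ^ (2:ℝ)) ^ ((1:ℝ)/2) := by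
    rw [PiLp.norm_eq_sum (by norm_num : 0 < (2:ℝ≥0∞).toReal)]
    norm_num
  have hLp : ‖(WithLp.equiv (ENNReal.ofReal p) (Fin n → 𝕂)).symm w‖
      = (∑ i, ‖w i‖ ^ p) ^ (1/p) := by
    rw [PiLp.norm_eq_sum (by rw [htr]; exact hp0), htr]
    rfl
  rw [hL2, hLp]
  -- Hölder
  have holder := Real.inner_le_weight_mul_Lp_of_nonneg (Finset.univ : Finset (Fin n))
    (p := p/2) (by linarith) (fun _ => (1:ℝ)) (fun i => ‖w i‖ ^ (2:ℝ))
    (fun _ => zero_le_one) (fun i => by positivity)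
  simp only [one_mul, Finset.sum_const, Finset.card_univ, Fintype.card_fin, nsmul_eq_mul,
    mul_one] at holder
  have hrw : ∀ i : Fin n, (‖w i‖ ^ (2:ℝ)) ^ (p/2) = ‖w i‖ ^ p := by
    intro i
    rw [← Real.rpow_mul (norm_nonneg _)]
    congr 1; ring
  rw [Finset.sum_congr rfl (fun i _ => hrw i)] at holder
  have hinv : (p/2)⁻¹ = 2/p := by field_simp
  have h1 : (1:ℝ) - (p/2)⁻¹ = 1 - 2/p := by rw [hinv]
  rw [hinv] at holder
  have hs2 : (0:ℝ) ≤ ∑ i, ‖w i‖ ^ (2:ℝ) := by positivity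
  have hsp : (0:ℝ) ≤ ∑ i, ‖w i‖ ^ p := by positivity
  calc (∑ i, ‖w i‖ ^ (2:ℝ)) ^ ((1:ℝ)/2)
      ≤ ((n:ℝ) ^ (1 - 2/p) * (∑ i, ‖w i‖ ^ p) ^ (2/p)) ^ ((1:ℝ)/2) := by
        apply Real.rpow_le_rpow hs2 holder (by norm_num)
    _ = (n:ℝ) ^ ((1:ℝ)/2 - 1/p) * (∑ i, ‖w i‖ ^ p) ^ (1/p) := by
        have e1 : (1 - 2/p) * (1/2) = (1:ℝ)/2 - 1/p := by ring
        have e2 : (2/p) * (1/2) = (1:ℝ)/p := by ring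
        rw [Real.mul_rpow (by positivity) (by positivity),
          ← Real.rpow_mul (by positivity), ← Real.rpow_mul hsp, e1, e2]


end KSZhelpers

set_option maxHeartbeats 2000000 in
lemma KSZ.core (𝕂 : Type*) [RCLike 𝕂] (k n : ℕ) (hk : 1 ≤ k) (hn : 0 < n) :
    ∃ c : (Fin k → Fin n) → 𝕂, (∀ i, c i = 1 ∨ c i = -1) ∧
      ∀ x : ∀ _ : Fin k, PiLp 2 (fun _ : Fin n => 𝕂),
        ‖KSZ.mk c (fun _ => 2) x‖ ≤
          (2 * Real.sqrt (4 * (finrank ℝ 𝕂) * k * Real.log (1 + 4 * k) + 8))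
            * Real.sqrt n * ∏ j, ‖x j‖ := by
  classical
  set E := PiLp 2 (fun _ : Fin n => 𝕂) with hE
  haveI : Nonempty (Fin n) := ⟨⟨0, hn⟩⟩
  haveI : Nontrivial E := (WithLp.linearEquiv 2 𝕂 (Fin n → 𝕂)).toEquiv.nontrivial
  set D := finrank ℝ 𝕂 with hD
  have hD1 : 1 ≤ D := Module.finrank_pos
  have hdim : finrank ℝ E = n * D := by
    have e1 : finrank ℝ E = finrank ℝ (Fin n → 𝕂) := (WithLp.linearEquiv 2 ℝ (Fin n → 𝕂)).finrank_eq
    rw [e1, Module.finrank_pi_fintype, Finset.sum_const, Finset.card_univ, Fintype.card_fin,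
      smul_eq_mul]
  set L := Real.log (1 + 4 * (k:ℝ)) with hL
  have hk' : (1:ℝ) ≤ (k:ℝ) := by exact_mod_cast hk
  have hL0 : 0 ≤ L := Real.log_nonneg (by linarith)
  set t := Real.sqrt ((n:ℝ) * (4 * D * k * L + 8)) with ht
  have htarg : (0:ℝ) ≤ (n:ℝ) * (4 * D * k * L + 8) := by positivity
  have ht0 : 0 ≤ t := Real.sqrt_nonneg _
  have htsq : t ^ 2 = (n:ℝ) * (4 * D * k * L + 8) := Real.sq_sqrt htarg
  -- the net
  have hδ : (0:ℝ) < 1 / (2 * k) := by positivity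
  obtain ⟨T, hT1, hT2, hT3⟩ := KSZ.exists_net E hδ
  have hTcard : (T.card : ℝ) ≤ (1 + 4 * k) ^ (n * D) := by
    rw [← hdim]
    have e2 : 2 / ((1:ℝ)/(2*k)) = 4*k := by
      rw [div_div_eq_mul_div, div_one, two_mul]; ring
    convert hT2 using 2
    rw [e2]
  -- counting setup
  set N := Fintype.card (Fin k → Fin n) with hN
  set ev : E → (Fin n → 𝕂) := fun v => WithLp.equiv 2 (Fin n → 𝕂) v with hev
  set coeffs : (Fin k → E) → (Fin k → Fin n) → 𝕂 :=
    fun y i => ∏ j, ev (y j) (i j) with hco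
  set sgn : ((Fin k → Fin n) → Bool) → (Fin k → Fin n) → 𝕂 :=
    fun f i => if f i then (1:𝕂) else -1 with hsgn
  set Ssum : ((Fin k → Fin n) → Bool) → (Fin k → E) → 𝕂 :=
    fun f y => ∑ i, sgn f i * coeffs y i with hSsum
  set t' := t / Real.sqrt 2 with ht'
  have ht'0 : 0 ≤ t' := by positivity
  have ht'sq : t' ^ 2 = t ^ 2 / 2 := by
    rw [ht', div_pow, Real.sq_sqrt two_pos.le]
  have hexp : -(t' ^ 2) / 2 = -(t ^ 2) / 4 := by rw [ht'sq]; ring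
  have perY : ∀ y : Fin k → E, (∀ j, ‖y j‖ ≤ 1) →
      ((Finset.univ.filter (fun f : (Fin k → Fin n) → Bool => t < ‖Ssum f y‖)).card : ℝ)
        ≤ 4 * (2 ^ N * Real.exp (-(t ^ 2) / 4)) := by
    intro y hy
    set a : (Fin k → Fin n) → ℝ := fun i => RCLike.re (coeffs y i) with ha
    set b : (Fin k → Fin n) → ℝ := fun i => RCLike.im (coeffs y i) with hb
    have habsum : ∑ i, (a i ^ 2 + b i ^ 2) ≤ 1 := by
      have h1 : ∀ i, a i ^ 2 + b i ^ 2 = ‖coeffs y i‖ ^ 2 := by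
        intro i
        rw [RCLike.norm_sq_eq_def]
        simp [ha, hb]
        ring
      rw [Finset.sum_congr rfl (fun i _ => h1 i)]
      have h2 : ∀ i : Fin k → Fin n, ‖coeffs y i‖ ^ 2 = ∏ j, ‖ev (y j) (i j)‖ ^ 2 := by
        intro i
        rw [hco]
        simp only
        rw [norm_prod, ← Finset.prod_pow]
      rw [Finset.sum_congr rfl (fun i _ => h2 i)]
      have h3 := Finset.sum_prod_piFinset (Finset.univ : Finset (Fin n))
        (fun j m => ‖ev (y j) m‖ ^ 2)
      rw [Fintype.piFinset_univ] at h3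
      rw [h3]
      apply Finset.prod_le_one (fun j _ => by positivity)
      intro j _
      have h4 : ∑ m, ‖ev (y j) m‖ ^ 2 = ‖y j‖ ^ 2 := (PiLp.norm_sq_eq_of_L2 _ (y j)).symm
      rw [h4]
      exact pow_le_one₀ (norm_nonneg _) (hy j)
    have hasum : ∑ i, a i ^ 2 ≤ 1 :=
      le_trans (Finset.sum_le_sum (fun i _ => le_add_of_nonneg_right (sq_nonneg (b i)))) habsum
    have hbsum : ∑ i, b i ^ 2 ≤ 1 :=
      le_trans (Finset.sum_le_sum (fun i _ => le_add_of_nonneg_left (sq_nonneg (a i)))) habsum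
    have hre : ∀ f, RCLike.re (Ssum f y) = ∑ i, (if f i then (1:ℝ) else -1) * a i := by
      intro f
      rw [hSsum]
      simp only
      rw [map_sum]
      apply Finset.sum_congr rfl
      intro i _
      have hcoe : sgn f i * coeffs y i = (if f i then (1:ℝ) else -1) • coeffs y i := by
        by_cases hfi : f i <;>
          simp [hsgn, hfi, RCLike.real_smul_eq_coe_mul]
      rw [hcoe, RCLike.smul_re]
    have him : ∀ f, RCLike.im (Ssum f y) = ∑ i, (if f i then (1:ℝ) else -1) * b i := by
      intro f
      rw [hSsum]
      simp only
      rw [map_sum]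
      apply Finset.sum_congr rfl
      intro i _
      have hcoe : sgn f i * coeffs y i = (if f i then (1:ℝ) else -1) • coeffs y i := by
        by_cases hfi : f i <;>
          simp [hsgn, hfi, RCLike.real_smul_eq_coe_mul]
      rw [hcoe, RCLike.smul_im]
    set F : ((Fin k → Fin n) → ℝ) → Finset ((Fin k → Fin n) → Bool) :=
      fun v => Finset.univ.filter (fun f => t' ≤ ∑ i, (if f i then (1:ℝ) else -1) * v i) with hF
    have hsubbad : Finset.univ.filter (fun f : (Fin k → Fin n) → Bool => t < ‖Ssum f y‖)
        ⊆ ((F a ∪ F (fun i => -(a i))) ∪ (F b ∪ F (fun i => -(b i)))) := by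
      intro f hf
      rw [Finset.mem_filter] at hf
      have hlt : t ^ 2 < RCLike.re (Ssum f y) ^ 2 + RCLike.im (Ssum f y) ^ 2 := by
        have h6 : t ^ 2 < ‖Ssum f y‖ ^ 2 := by
          apply pow_lt_pow_left₀ hf.2 ht0 (by norm_num)
        calc t ^ 2 < ‖Ssum f y‖ ^ 2 := h6
          _ = _ := by rw [RCLike.norm_sq_eq_def]; ring
      have hcase : t' ^ 2 ≤ RCLike.re (Ssum f y) ^ 2 ∨ t' ^ 2 ≤ RCLike.im (Ssum f y) ^ 2 := by
        by_contra hcon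
        push_neg at hcon
        rw [ht'sq] at hcon
        obtain ⟨h7, h8⟩ := hcon
        nlinarith
      simp only [Finset.mem_union, hF, Finset.mem_filter, Finset.mem_univ, true_and]
      rcases hcase with hc | hc
      · left
        have habs : t' ≤ |RCLike.re (Ssum f y)| := by
          nlinarith [abs_nonneg (RCLike.re (Ssum f y)), sq_abs (RCLike.re (Ssum f y))]
        rcases abs_cases (RCLike.re (Ssum f y)) with ⟨heq, _⟩ | ⟨heq, _⟩
        · left; rw [heq, hre f] at habs; exact habs
        · right
          rw [heq, hre f] at habs
          calc t' ≤ -∑ i, (if f i then (1:ℝ) else -1) * a i := habs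
            _ = ∑ i, (if f i then (1:ℝ) else -1) * -(a i) := by
                rw [← Finset.sum_neg_distrib]
                exact Finset.sum_congr rfl (fun i _ => by ring)
      · right
        have habs : t' ≤ |RCLike.im (Ssum f y)| := by
          nlinarith [abs_nonneg (RCLike.im (Ssum f y)), sq_abs (RCLike.im (Ssum f y))]
        rcases abs_cases (RCLike.im (Ssum f y)) with ⟨heq, _⟩ | ⟨heq, _⟩
        · left; rw [heq, him f] at habs; exact habs
        · right
          rw [heq, him f] at habs
          calc t' ≤ -∑ i, (if f i then (1:ℝ) else -1) * b i := habs
            _ = ∑ i, (if f i then (1:ℝ) else -1) * -(b i) := by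
                rw [← Finset.sum_neg_distrib]
                exact Finset.sum_congr rfl (fun i _ => by ring)
    have hFbound : ∀ v : (Fin k → Fin n) → ℝ, (∑ i, v i ^ 2 ≤ 1) →
        ((F v).card : ℝ) ≤ 2 ^ N * Real.exp (-(t ^ 2) / 4) := by
      intro v hv
      have := KSZ.hoeffding_count v hv ht'0
      rw [hexp] at this
      exact this
    have hcard : ((Finset.univ.filter
        (fun f : (Fin k → Fin n) → Bool => t < ‖Ssum f y‖)).card : ℝ)
        ≤ ((F a).card : ℝ) + ((F (fun i => -(a i))).card : ℝ)
          + (((F b).card : ℝ) + ((F (fun i => -(b i))).card : ℝ)) := by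
      have h9 := Finset.card_le_card hsubbad
      have h10 := Finset.card_union_le (F a ∪ F (fun i => -(a i))) (F b ∪ F (fun i => -(b i)))
      have h11 := Finset.card_union_le (F a) (F (fun i => -(a i)))
      have h12 := Finset.card_union_le (F b) (F (fun i => -(b i)))
      push_cast
      have := le_trans h9 h10
      calc ((Finset.univ.filter
          (fun f : (Fin k → Fin n) → Bool => t < ‖Ssum f y‖)).card : ℝ)
          ≤ (((F a ∪ F (fun i => -(a i))).card + (F b ∪ F (fun i => -(b i))).card : ℕ) : ℝ) := by
            exact_mod_cast this
        _ ≤ _ := by push_cast; exact_mod_cast add_le_add h11 h12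
    have hna : ∑ i, (-(a i)) ^ 2 ≤ 1 := by simpa using hasum
    have hnb : ∑ i, (-(b i)) ^ 2 ≤ 1 := by simpa using hbsum
    calc ((Finset.univ.filter
        (fun f : (Fin k → Fin n) → Bool => t < ‖Ssum f y‖)).card : ℝ)
        ≤ ((F a).card : ℝ) + ((F (fun i => -(a i))).card : ℝ)
          + (((F b).card : ℝ) + ((F (fun i => -(b i))).card : ℝ)) := hcard
      _ ≤ 2 ^ N * Real.exp (-(t ^ 2) / 4) + 2 ^ N * Real.exp (-(t ^ 2) / 4)
          + (2 ^ N * Real.exp (-(t ^ 2) / 4) + 2 ^ N * Real.exp (-(t ^ 2) / 4)) := by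
          have := hFbound a hasum
          have := hFbound (fun i => -(a i)) hna
          have := hFbound b hbsum
          have := hFbound (fun i => -(b i)) hnb
          gcongr <;> assumption
      _ = 4 * (2 ^ N * Real.exp (-(t ^ 2) / 4)) := by ring
  -- union bound
  set Bad := Finset.univ.filter (fun f : (Fin k → Fin n) → Bool =>
    ∃ y ∈ Fintype.piFinset (fun _ : Fin k => T), t < ‖Ssum f y‖) with hBad
  have hmemT : ∀ y ∈ Fintype.piFinset (fun _ : Fin k => T), ∀ j : Fin k, ‖y j‖ ≤ 1 := by
    intro y hy j
    have h1 := Fintype.mem_piFinset.1 hy j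
    have h2 := hT1 h1
    rwa [mem_closedBall_zero_iff] at h2
  have hBadcard : (Bad.card : ℝ)
      ≤ ((T.card : ℝ)) ^ k * (4 * (2 ^ N * Real.exp (-(t ^ 2) / 4))) := by
    have hBadsub : Bad ⊆ (Fintype.piFinset (fun _ : Fin k => T)).biUnion
        (fun y => Finset.univ.filter (fun f => t < ‖Ssum f y‖)) := by
      intro f hf
      rw [hBad, Finset.mem_filter] at hf
      obtain ⟨-, y, hy, hys⟩ := hf
      exact Finset.mem_biUnion.2 ⟨y, hy, Finset.mem_filter.2 ⟨Finset.mem_univ _, hys⟩⟩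
    calc (Bad.card : ℝ) ≤ (((Fintype.piFinset (fun _ : Fin k => T)).biUnion
        (fun y => Finset.univ.filter (fun f => t < ‖Ssum f y‖))).card : ℝ) := by
          exact_mod_cast Finset.card_le_card hBadsub
      _ ≤ ∑ y ∈ Fintype.piFinset (fun _ : Fin k => T),
            ((Finset.univ.filter (fun f => t < ‖Ssum f y‖)).card : ℝ) := by
          exact_mod_cast Finset.card_biUnion_le
      _ ≤ ∑ _y ∈ Fintype.piFinset (fun _ : Fin k => T),
            (4 * (2 ^ N * Real.exp (-(t ^ 2) / 4))) :=
          Finset.sum_le_sum (fun y hy => perY y (hmemT y hy))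
      _ = ((Fintype.piFinset (fun _ : Fin k => T)).card : ℝ)
            * (4 * (2 ^ N * Real.exp (-(t ^ 2) / 4))) := by
          rw [Finset.sum_const, nsmul_eq_mul]
      _ = ((T.card : ℝ)) ^ k * (4 * (2 ^ N * Real.exp (-(t ^ 2) / 4))) := by
          rw [Fintype.card_piFinset_const]
          push_cast
          ring
  have hstrict : ((T.card : ℝ)) ^ k * (4 * (2 ^ N * Real.exp (-(t ^ 2) / 4)))
      < 2 ^ N := by
    have hpos14 : (0:ℝ) < 1 + 4 * k := by linarith
    have key : ((1 + 4 * (k:ℝ)) ^ (n * D)) ^ k * (4 * Real.exp (-(t ^ 2) / 4)) < 1 := by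
      have he : ((1 + 4 * (k:ℝ)) ^ (n * D)) ^ k = Real.exp (((n * D * k : ℕ) : ℝ) * L) := by
        rw [← pow_mul, Real.exp_nat_mul, hL, Real.exp_log hpos14, mul_assoc]
      have hfour : (4:ℝ) = Real.exp (Real.log 4) := (Real.exp_log (by norm_num)).symm
      have hlog4 : Real.log 4 < 2 := by
        have h4 : (4:ℝ) = 2 ^ 2 := by norm_num
        rw [h4, Real.log_pow]
        have := Real.log_two_lt_d9
        push_cast
        nlinarith
      have harg : ((n * D * k : ℕ) : ℝ) * L + (Real.log 4 + -(t ^ 2) / 4) < 0 := by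
        rw [htsq]
        push_cast
        have hn1 : (1:ℝ) ≤ (n:ℝ) := by exact_mod_cast hn
        nlinarith
      calc ((1 + 4 * (k:ℝ)) ^ (n * D)) ^ k * (4 * Real.exp (-(t ^ 2) / 4))
          = Real.exp (((n * D * k : ℕ) : ℝ) * L)
            * (Real.exp (Real.log 4) * Real.exp (-(t ^ 2) / 4)) := by
            rw [he, ← hfour]
        _ = Real.exp (((n * D * k : ℕ) : ℝ) * L + (Real.log 4 + -(t ^ 2) / 4)) := by
            rw [Real.exp_add, Real.exp_add]
        _ < 1 := Real.exp_lt_one_iff.2 harg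
    have h2N : (0:ℝ) < 2 ^ N := by positivity
    have hTk : ((T.card : ℝ)) ^ k ≤ ((1 + 4 * (k:ℝ)) ^ (n * D)) ^ k :=
      pow_le_pow_left₀ (by positivity) hTcard k
    have hexps : (0:ℝ) < 4 * Real.exp (-(t ^ 2) / 4) := by positivity
    calc ((T.card : ℝ)) ^ k * (4 * (2 ^ N * Real.exp (-(t ^ 2) / 4)))
        = (((T.card : ℝ)) ^ k * (4 * Real.exp (-(t ^ 2) / 4))) * 2 ^ N := by ring
      _ ≤ ((((1 + 4 * (k:ℝ)) ^ (n * D)) ^ k) * (4 * Real.exp (-(t ^ 2) / 4))) * 2 ^ N := by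
          apply mul_le_mul_of_nonneg_right _ h2N.le
          exact mul_le_mul_of_nonneg_right hTk hexps.le
      _ < 1 * 2 ^ N := by
          exact mul_lt_mul_of_pos_right key h2N
      _ = 2 ^ N := one_mul _
  have hex : ∃ f : (Fin k → Fin n) → Bool, f ∉ Bad := by
    by_contra hcon
    push_neg at hcon
    have huniv : Bad = Finset.univ := Finset.eq_univ_iff_forall.2 hcon
    have hcards : (Bad.card : ℝ) = (2:ℝ) ^ N := by
      rw [huniv, Finset.card_univ]
      rw [Fintype.card_fun]
      push_cast
      simp [hN]
    linarith
  obtain ⟨f, hf⟩ := hex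
  have hgood : ∀ y ∈ Fintype.piFinset (fun _ : Fin k => T), ‖Ssum f y‖ ≤ t := by
    intro y hy
    by_contra hcon
    push_neg at hcon
    exact hf (Finset.mem_filter.2 ⟨Finset.mem_univ _, ⟨y, hy, hcon⟩⟩)
  -- the good sign choice
  set c : (Fin k → Fin n) → 𝕂 := fun i => if f i then (1:𝕂) else -1 with hcdef
  refine ⟨c, fun i => by by_cases hfi : f i <;> simp [hcdef, hfi], ?_⟩
  set B := KSZ.mk (𝕂 := 𝕂) c (fun _ => (2:ℝ≥0∞)) with hB
  have hBapp : ∀ x : Fin k → E, B x = Ssum f x := by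
    intro x
    rw [hB, KSZ.mk_apply]
  have hcrude : ∀ x : Fin k → E, (∀ j, ‖x j‖ ≤ 1) → ‖B x‖ ≤ (N : ℝ) := by
    intro x hx
    rw [hBapp]
    have hbound : ∀ i : Fin k → Fin n, ‖sgn f i * coeffs x i‖ ≤ 1 := by
      intro i
      rw [norm_mul]
      have h1 : ‖sgn f i‖ = 1 := by by_cases hfi : f i <;> simp [hsgn, hfi]
      rw [h1, one_mul, hco]
      calc ‖∏ j, ev (x j) (i j)‖ = ∏ j, ‖ev (x j) (i j)‖ := norm_prod _ _
        _ ≤ ∏ _j : Fin k, (1:ℝ) :=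
            Finset.prod_le_prod (fun _ _ => norm_nonneg _)
              (fun j _ => le_trans (KSZ.coord_le_norm (x j) (i j)) (hx j))
        _ = 1 := by simp
    calc ‖Ssum f x‖ ≤ ∑ i, ‖sgn f i * coeffs x i‖ := norm_sum_le _ _
      _ ≤ ∑ _i : Fin k → Fin n, (1:ℝ) := Finset.sum_le_sum (fun i _ => hbound i)
      _ = (N:ℝ) := by rw [Finset.sum_const, Finset.card_univ, nsmul_eq_mul, mul_one, hN]
  set SS : Set ℝ := {v : ℝ | ∃ x : Fin k → E, (∀ j, ‖x j‖ ≤ 1) ∧ v = ‖B x‖} with hSS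
  have h0mem : (‖B 0‖ : ℝ) ∈ SS := ⟨0, fun j => by simp, rfl⟩
  have hSSne : SS.Nonempty := ⟨‖B 0‖, h0mem⟩
  have hSSbdd : BddAbove SS := ⟨(N:ℝ), by rintro v ⟨x, hx, rfl⟩; exact hcrude x hx⟩
  set M := sSup SS with hM
  have hM0 : 0 ≤ M := le_trans (norm_nonneg (B 0)) (le_csSup hSSbdd h0mem)
  have hMbound := KSZ.bound_of_ball_bound B hM0
    (fun x hx => le_csSup hSSbdd ⟨x, hx, rfl⟩)
  have hstep : ∀ v ∈ SS, v ≤ t + M * (1/2) := by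
    rintro v ⟨x, hx, rfl⟩
    choose yy hyyT hyyd using fun j => hT3 (x j) (mem_closedBall_zero_iff.2 (hx j))
    have h1 : ‖B yy‖ ≤ t := by
      rw [hBapp]
      exact hgood yy (Fintype.mem_piFinset.2 hyyT)
    have hdiff := B.norm_image_sub_le_of_bound hM0 hMbound x yy
    have hxn : ‖x‖ ≤ 1 := (pi_norm_le_iff_of_nonneg zero_le_one).2 hx
    have hyn : ‖yy‖ ≤ 1 := (pi_norm_le_iff_of_nonneg zero_le_one).2
      (fun j => mem_closedBall_zero_iff.1 (hT1 (hyyT j)))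
    have hxy : ‖x - yy‖ ≤ 1/(2*k) := (pi_norm_le_iff_of_nonneg hδ.le).2
      (fun j => by rw [Pi.sub_apply, ← dist_eq_norm]; exact hyyd j)
    have hmax : max ‖x‖ ‖yy‖ ^ (Fintype.card (Fin k) - 1) ≤ 1 :=
      pow_le_one₀ (le_max_iff.2 (Or.inl (norm_nonneg _))) (max_le hxn hyn)
    have hknz : ((2:ℝ) * k) ≠ 0 := by positivity
    calc ‖B x‖ = ‖B yy + (B x - B yy)‖ := by rw [add_sub_cancel]
      _ ≤ ‖B yy‖ + ‖B x - B yy‖ := norm_add_le _ _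
      _ ≤ t + M * (Fintype.card (Fin k)) * (max ‖x‖ ‖yy‖ ^ (Fintype.card (Fin k) - 1))
            * ‖x - yy‖ := by
          apply add_le_add h1
          calc ‖B x - B yy‖ ≤ M * (Fintype.card (Fin k))
                * max ‖x‖ ‖yy‖ ^ (Fintype.card (Fin k) - 1) * ‖x - yy‖ := hdiff
            _ = _ := by ring
      _ ≤ t + M * k * 1 * (1/(2*k)) := by
          apply add_le_add_right
          rw [Fintype.card_fin]
          have hMk : (0:ℝ) ≤ M * k := by positivity
          calc M * (k:ℝ) * (max ‖x‖ ‖yy‖ ^ (k - 1)) * ‖x - yy‖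
              ≤ M * (k:ℝ) * 1 * ‖x - yy‖ := by
                apply mul_le_mul_of_nonneg_right _ (norm_nonneg _)
                rw [Fintype.card_fin] at hmax
                exact mul_le_mul_of_nonneg_left hmax hMk
            _ ≤ M * k * 1 * (1/(2*k)) := by
                apply mul_le_mul_of_nonneg_left hxy
                positivity
      _ = t + M * (1/2) := by
          field_simp
  have hM2 : M ≤ t + M * (1/2) := csSup_le hSSne hstep
  have hMt : M ≤ 2 * t := by linarith
  have hfinal := KSZ.bound_of_ball_bound B (by positivity : (0:ℝ) ≤ 2 * t)
    (fun x hx => le_trans (le_csSup hSSbdd ⟨x, hx, rfl⟩) hMt)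
  intro x
  calc ‖KSZ.mk (𝕂 := 𝕂) c (fun _ => (2:ℝ≥0∞)) x‖ ≤ 2 * t * ∏ j, ‖x j‖ := hfinal x
    _ = 2 * Real.sqrt (4 * D * k * L + 8) * Real.sqrt n * ∏ j, ‖x j‖ := by
        rw [ht, Real.sqrt_mul (by positivity : (0:ℝ) ≤ (n:ℝ))]
        ring
set_option maxHeartbeats 1000000 in
/-- **Kahane–Salem–Zygmund inequality.** For each `k ≥ 1` there is `C_k > 0` such that for all
`r₁, …, r_k ∈ [2, ∞)` and every `n ≥ 1` there exists a `k`-linear form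
`A : ℓ_{r₁}^n × ⋯ × ℓ_{r_k}^n → 𝕂` with coefficients `A(e_{i₁}, …, e_{i_k}) ∈ {−1, +1}`
and `‖A‖ ≤ C_k ⬝ n^{(k+1)/2 − (1/r₁ + ⋯ + 1/r_k)}`. -/
theorem stmt12 (𝕂 : Type*) [RCLike 𝕂] (k : ℕ) (hk : 1 ≤ k) :
    ∃ C : ℝ, 0 < C ∧ ∀ r : Fin k → ℝ, ∀ hr : (∀ i, 2 ≤ r i), ∀ n : ℕ, 0 < n →
      haveI : ∀ i : Fin k, Fact (1 ≤ ENNReal.ofReal (r i)) := fun i =>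
        ⟨ENNReal.one_le_ofReal.mpr (by linarith [hr i] )⟩
      ∃ A : ContinuousMultilinearMap 𝕂
          (fun i : Fin k => PiLp (ENNReal.ofReal (r i)) (fun _ : Fin n => 𝕂)) 𝕂,
        (∀ i : Fin k → Fin n,
          A (fun j => (WithLp.equiv (ENNReal.ofReal (r j)) (Fin n → 𝕂)).symm
              (Pi.single (i j) 1)) = 1 ∨
          A (fun j => (WithLp.equiv (ENNReal.ofReal (r j)) (Fin n → 𝕂)).symm
              (Pi.single (i j) 1)) = -1) ∧
        ‖A‖ ≤ C * (n : ℝ) ^ (((k : ℝ) + 1) / 2 - ∑ i, 1 / r i) := by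
  classical
  set D := finrank ℝ 𝕂 with hD
  set L := Real.log (1 + 4 * (k:ℝ)) with hL
  have hk' : (1:ℝ) ≤ (k:ℝ) := by exact_mod_cast hk
  have hL0 : 0 ≤ L := Real.log_nonneg (by linarith)
  set C := 2 * Real.sqrt (4 * D * k * L + 8) with hC
  have hC0 : 0 < C := by
    rw [hC]
    apply mul_pos two_pos (Real.sqrt_pos.2 (by positivity))
  refine ⟨C, hC0, ?_⟩
  intro r hr n hn
  haveI : ∀ i : Fin k, Fact (1 ≤ ENNReal.ofReal (r i)) := fun i =>
    ⟨ENNReal.one_le_ofReal.mpr (by linarith [hr i])⟩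
  obtain ⟨c, hc1, hc2⟩ := KSZ.core 𝕂 k n hk hn
  set p : Fin k → ℝ≥0∞ := fun j => ENNReal.ofReal (r j) with hp
  set A0 := KSZ.mk (𝕂 := 𝕂) c p with hA0
  have hnpos : (0:ℝ) < (n:ℝ) := by exact_mod_cast hn
  have hbound : ∀ x : ∀ j : Fin k, PiLp (p j) (fun _ : Fin n => 𝕂),
      ‖A0 x‖ ≤ (C * (n:ℝ) ^ (((k:ℝ)+1)/2 - ∑ i, 1 / r i)) * ∏ j, ‖x j‖ := by
    intro x
    set w : ∀ _j : Fin k, Fin n → 𝕂 := fun j => WithLp.equiv (p j) (Fin n → 𝕂) (x j) with hw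
    have heq : A0 x = KSZ.mk (𝕂 := 𝕂) c (fun _ => (2:ℝ≥0∞))
        (fun j => (WithLp.equiv 2 (Fin n → 𝕂)).symm (w j)) := by
      rw [hA0, KSZ.mk_apply, KSZ.mk_apply]
      simp [hw]
    rw [heq]
    calc ‖KSZ.mk (𝕂 := 𝕂) c (fun _ => (2:ℝ≥0∞))
          (fun j => (WithLp.equiv 2 (Fin n → 𝕂)).symm (w j))‖
        ≤ (2 * Real.sqrt (4 * D * k * L + 8)) * Real.sqrt n
          * ∏ j, ‖(WithLp.equiv 2 (Fin n → 𝕂)).symm (w j)‖ := hc2 _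
      _ ≤ C * Real.sqrt n * ∏ j, ((n:ℝ) ^ ((1:ℝ)/2 - 1/(r j)) * ‖x j‖) := by
          rw [hC]
          apply mul_le_mul_of_nonneg_left _ (by positivity)
          apply Finset.prod_le_prod (fun _ _ => norm_nonneg _)
          intro j _
          have hlp := KSZ.l2_le_lp (𝕂 := 𝕂) (hr j) (w j)
          have hsymm : (WithLp.equiv (ENNReal.ofReal (r j)) (Fin n → 𝕂)).symm (w j) = x j := by
            rw [hw]
            exact (WithLp.equiv (p j) (Fin n → 𝕂)).symm_apply_apply (x j)
          rwa [hsymm] at hlp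
      _ = (C * (n:ℝ) ^ (((k:ℝ)+1)/2 - ∑ i, 1 / r i)) * ∏ j, ‖x j‖ := by
          rw [Finset.prod_mul_distrib]
          have e1 : ∏ j : Fin k, (n:ℝ) ^ ((1:ℝ)/2 - 1/(r j))
              = (n:ℝ) ^ (∑ j : Fin k, ((1:ℝ)/2 - 1/(r j))) :=
            (Real.rpow_sum_of_pos hnpos _ _).symm
          have e2 : Real.sqrt (n:ℝ) = (n:ℝ) ^ ((1:ℝ)/2) := Real.sqrt_eq_rpow _
          have e3 : (∑ j : Fin k, ((1:ℝ)/2 - 1/(r j))) = (k:ℝ)/2 - ∑ i, 1/(r i) := by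
            rw [Finset.sum_sub_distrib, Finset.sum_const, Finset.card_univ, Fintype.card_fin,
              nsmul_eq_mul]
            ring
          have e4 : (n:ℝ) ^ ((1:ℝ)/2) * (n:ℝ) ^ ((k:ℝ)/2 - ∑ i, 1/(r i))
              = (n:ℝ) ^ (((k:ℝ)+1)/2 - ∑ i, 1 / r i) := by
            rw [← Real.rpow_add hnpos]
            congr 1
            ring
          rw [e1, e2, e3]
          rw [mul_assoc, ← mul_assoc ((n:ℝ) ^ ((1:ℝ)/2)), e4]
          ring
  set Kc := C * (n:ℝ) ^ (((k:ℝ)+1)/2 - ∑ i, 1 / r i) with hKc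
  have hKc0 : 0 ≤ Kc := by
    rw [hKc]
    positivity
  refine ⟨A0.mkContinuous Kc hbound, ?_, ?_⟩
  · intro i
    have happ : (A0.mkContinuous Kc hbound)
        (fun j => (WithLp.equiv (p j) (Fin n → 𝕂)).symm (Pi.single (i j) 1)) = c i := by
      have hcoe : (A0.mkContinuous Kc hbound)
          (fun j => (WithLp.equiv (p j) (Fin n → 𝕂)).symm (Pi.single (i j) 1))
          = A0 (fun j => (WithLp.equiv (p j) (Fin n → 𝕂)).symm (Pi.single (i j) 1)) := rfl
      rw [hcoe, hA0, KSZ.mk_apply]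
      rw [Finset.sum_eq_single i]
      · have : ∀ j : Fin k, (WithLp.equiv (p j) (Fin n → 𝕂))
            ((WithLp.equiv (p j) (Fin n → 𝕂)).symm (Pi.single (i j) (1:𝕂))) (i j) = 1 := by
          intro j
          rw [(WithLp.equiv (p j) (Fin n → 𝕂)).apply_symm_apply]
          simp
        rw [Finset.prod_congr rfl (fun j _ => this j), Finset.prod_const_one, mul_one]
      · intro i' _ hne
        obtain ⟨j0, hj0⟩ := Function.ne_iff.1 hne
        apply mul_eq_zero_of_right
        apply Finset.prod_eq_zero (Finset.mem_univ j0)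
        rw [(WithLp.equiv (p j0) (Fin n → 𝕂)).apply_symm_apply]
        exact Pi.single_eq_of_ne hj0 _
      · intro habs
        exact absurd (Finset.mem_univ i) habs
    rcases hc1 i with h | h
    · left; rw [happ, h]
    · right; rw [happ, h]
  · exact A0.mkContinuous_norm_le hKc0 hbound
end

section
/- (Aron–Globevnik diagonal inequality.) Let 𝕂 be ℝ or ℂ and let m be a positive integer. There is a constant C ≥ 1 (depending only on m and 𝕂, not on n) such that for every positive integer n and every m-linear form T : ℓ_∞^n × ⋯ × ℓ_∞^n → 𝕂, one has ∑_{j=1}^{n} |T(e_j, e_j, …, e_j)| ≤ C · ‖T‖. -/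
open scoped ENNReal
open Finset

/-- **Aron–Globevnik diagonal inequality.** For each `m ≥ 1` there is `C ≥ 1`
(not depending on `n`) such that for every `n ≥ 1` and every `m`-linear form
`T : ℓ_∞^n × ⋯ × ℓ_∞^n → 𝕂`, `∑_{j=1}^n |T(e_j, …, e_j)| ≤ C ⬝ ‖T‖`. -/
theorem stmt16 (𝕂 : Type*) [RCLike 𝕂] (m : ℕ) (hm : 1 ≤ m) :
    ∃ C : ℝ, 1 ≤ C ∧ ∀ n : ℕ, 0 < n →
      ∀ T : ContinuousMultilinearMap 𝕂 (fun _ : Fin m => PiLp ⊤ (fun _ : Fin n => 𝕂)) 𝕂,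
        ∑ j : Fin n,
            ‖T (fun _ => (WithLp.equiv ⊤ (Fin n → 𝕂)).symm (Pi.single j 1))‖
          ≤ C * ‖T‖ := by
  classical
  obtain ⟨m', rfl⟩ : ∃ m', m = m' + 1 := ⟨m - 1, (Nat.succ_pred_eq_of_pos hm).symm⟩
  refine ⟨1, le_refl 1, fun n hn T => ?_⟩
  have hne : Nonempty (Fin n) := ⟨⟨0, hn⟩⟩
  rw [one_mul]
  set e : Fin n → PiLp ⊤ (fun _ : Fin n => 𝕂) :=
    fun j => (WithLp.equiv ⊤ (Fin n → 𝕂)).symm (Pi.single j 1) with he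
  set a : Fin n → 𝕂 := fun j => T (fun _ => e j) with ha
  show ∑ j, ‖a j‖ ≤ ‖T‖
  -- signs
  set s : Bool → 𝕂 := fun b => if b then 1 else -1 with hs
  have hs_norm : ∀ b, ‖s b‖ = 1 := by intro b; cases b <;> simp [hs]
  -- unimodular θ
  set θ : Fin n → 𝕂 := fun j => if h : a j = 0 then 1 else (starRingEnd 𝕂) (a j) * ((‖a j‖ : 𝕂))⁻¹
    with hθ
  have hθ_norm : ∀ j, ‖θ j‖ = 1 := by
    intro j
    rw [hθ]
    by_cases h : a j = 0
    · simp [h]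
    · simp only [dif_neg h]
      rw [norm_mul, RCLike.norm_conj, norm_inv, RCLike.norm_ofReal,
        abs_of_nonneg (norm_nonneg _), mul_inv_cancel₀ (norm_ne_zero_iff.2 h)]
  have hθ_mul : ∀ j, θ j * a j = (‖a j‖ : 𝕂) := by
    intro j
    rw [hθ]
    by_cases h : a j = 0
    · simp [h]
    · have hc : ((‖a j‖ : 𝕂)) ≠ 0 := by
        simpa using norm_ne_zero_iff.2 h
      simp only [dif_neg h]
      rw [mul_right_comm, RCLike.conj_mul, pow_two, mul_assoc, mul_inv_cancel₀ hc, mul_one]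
  -- coefficients
  set coef : (Fin m' → Fin n → Bool) → Fin (m' + 1) → Fin n → 𝕂 :=
    fun ε i j => Fin.cases (θ j * ∏ k : Fin m', s (ε k j)) (fun i' => s (ε i' j)) i with hcoef
  have hcoef0 : ∀ ε j, coef ε 0 j = θ j * ∏ k : Fin m', s (ε k j) := fun ε j => rfl
  have hcoefs : ∀ ε (i' : Fin m') j, coef ε i'.succ j = s (ε i' j) := by
    intro ε i' j
    simp [hcoef]
  have hcoef_norm : ∀ ε i j, ‖coef ε i j‖ = 1 := by
    intro ε i j
    induction i using Fin.cases with
    | zero =>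
      rw [hcoef0, norm_mul, hθ_norm, one_mul, norm_prod]
      simp [hs_norm]
    | succ i' => rw [hcoefs, hs_norm]
  -- the test vectors
  set x : (Fin m' → Fin n → Bool) → Fin (m' + 1) → PiLp ⊤ (fun _ : Fin n => 𝕂) :=
    fun ε i => (WithLp.equiv ⊤ (Fin n → 𝕂)).symm (fun j => coef ε i j) with hx
  have hx_norm : ∀ ε i, ‖x ε i‖ ≤ 1 := by
    intro ε i
    rw [hx, PiLp.norm_eq_ciSup]
    exact ciSup_le fun j => le_of_eq (by simpa using hcoef_norm ε i j)
  have hx_sum : ∀ ε i, x ε i = ∑ j, coef ε i j • e j := by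
    intro ε i
    have h1 : x ε i
        = (WithLp.linearEquiv ⊤ 𝕂 (Fin n → 𝕂)).symm (∑ j, Pi.single j (coef ε i j)) := by
      rw [Finset.univ_sum_single (fun j => coef ε i j)]
      rfl
    rw [h1, map_sum]
    refine Finset.sum_congr rfl fun j _ => ?_
    rw [he]
    have h2 : Pi.single j (coef ε i j)
        = coef ε i j • Pi.single (M := fun _ : Fin n => 𝕂) j (1 : 𝕂) := by
      rw [← Pi.single_smul' j (coef ε i j) (1 : 𝕂), smul_eq_mul, mul_one]
    rw [h2, map_smul]
    rfl
  -- diagonal-tuple values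
  set b : (Fin (m' + 1) → Fin n) → 𝕂 := fun f => T (fun i => e (f i)) with hb
  -- multilinear expansion
  have hexp : ∀ ε, T (x ε) = ∑ f : Fin (m' + 1) → Fin n, (∏ i, coef ε i (f i)) • b f := by
    intro ε
    have h1 : T (x ε) = T (fun i => ∑ j, coef ε i j • e j) := by
      congr 1
      funext i
      exact hx_sum ε i
    rw [h1, T.map_sum]
    exact Finset.sum_congr rfl fun f _ =>
      T.toMultilinearMap.map_smul_univ (fun i => coef ε i (f i)) (fun i => e (f i))
  -- the basic orthogonality computation
  have hL : ∀ p q : Fin n, (∑ η : Fin n → Bool, s (η p) * s (η q))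
      = if p = q then ((2 : 𝕂) ^ n) else 0 := by
    intro p q
    have h1 : ∀ η : Fin n → Bool, s (η p) * s (η q)
        = ∏ j, ((if j = p then s (η j) else 1) * (if j = q then s (η j) else 1)) := by
      intro η
      rw [Finset.prod_mul_distrib, Fintype.prod_ite_eq' p (fun j => s (η j)),
        Fintype.prod_ite_eq' q (fun j => s (η j))]
    simp_rw [h1]
    rw [← Fintype.prod_sum
      (fun (j : Fin n) (c : Bool) => (if j = p then s c else 1) * (if j = q then s c else 1))]
    by_cases hpq : p = q
    · subst hpq
      rw [if_pos rfl]
      have h2 : ∀ j : Fin n,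
          (∑ c : Bool, ((if j = p then s c else 1) * (if j = p then s c else 1))) = 2 := by
        intro j
        by_cases hj : j = p <;> simp [hj, hs, Fintype.sum_bool] <;> norm_num
      rw [Finset.prod_congr rfl fun j _ => h2 j, Finset.prod_const, Finset.card_univ,
        Fintype.card_fin]
    · rw [if_neg hpq]
      refine Finset.prod_eq_zero (Finset.mem_univ p) ?_
      simp [hpq, hs, Fintype.sum_bool]
  -- averaging identity
  have key : (∑ ε : Fin m' → Fin n → Bool, T (x ε))
      = (((2 : 𝕂) ^ n) ^ m') * ((∑ j, ‖a j‖ : ℝ) : 𝕂) := by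
    simp_rw [hexp]
    rw [Finset.sum_comm]
    have hc : ∀ f : Fin (m' + 1) → Fin n,
        (∑ ε : Fin m' → Fin n → Bool, ∏ i, coef ε i (f i))
          = θ (f 0) * ∏ k : Fin m', (if f 0 = f k.succ then ((2 : 𝕂) ^ n) else 0) := by
      intro f
      have h2 : ∀ ε : Fin m' → Fin n → Bool, (∏ i, coef ε i (f i))
          = θ (f 0) * ∏ k : Fin m', (s (ε k (f 0)) * s (ε k (f k.succ))) := by
        intro ε
        rw [Fin.prod_univ_succ, hcoef0]
        simp_rw [hcoefs]
        rw [mul_assoc, ← Finset.prod_mul_distrib]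
      simp_rw [h2]
      rw [← Finset.mul_sum]
      congr 1
      rw [← Fintype.prod_sum
        (fun (k : Fin m') (η : Fin n → Bool) => s (η (f 0)) * s (η (f k.succ)))]
      exact Finset.prod_congr rfl fun k _ => hL (f 0) (f k.succ)
    have hswap : ∀ f : Fin (m' + 1) → Fin n,
        (∑ ε : Fin m' → Fin n → Bool, (∏ i, coef ε i (f i)) • b f)
          = (θ (f 0) * ∏ k : Fin m', (if f 0 = f k.succ then ((2 : 𝕂) ^ n) else 0)) • b f := by
      intro f
      rw [← Finset.sum_smul, hc f]
    rw [Finset.sum_congr rfl fun f _ => hswap f]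
    -- reindex by (first value, rest)
    rw [← Equiv.sum_comp (Fin.consEquiv (fun _ : Fin (m' + 1) => Fin n))]
    rw [Fintype.sum_prod_type]
    have hinner : ∀ j : Fin n,
        (∑ g : Fin m' → Fin n,
          (θ ((Fin.consEquiv (fun _ : Fin (m' + 1) => Fin n)) (j, g) 0)
            * ∏ k : Fin m',
              (if (Fin.consEquiv (fun _ : Fin (m' + 1) => Fin n)) (j, g) 0
                  = (Fin.consEquiv (fun _ : Fin (m' + 1) => Fin n)) (j, g) k.succ
                then ((2 : 𝕂) ^ n) else 0))
            • b ((Fin.consEquiv (fun _ : Fin (m' + 1) => Fin n)) (j, g)))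
        = (((2 : 𝕂) ^ n) ^ m') * (‖a j‖ : 𝕂) := by
      intro j
      have h3 : ∀ g : Fin m' → Fin n,
          (θ ((Fin.consEquiv (fun _ : Fin (m' + 1) => Fin n)) (j, g) 0)
            * ∏ k : Fin m',
              (if (Fin.consEquiv (fun _ : Fin (m' + 1) => Fin n)) (j, g) 0
                  = (Fin.consEquiv (fun _ : Fin (m' + 1) => Fin n)) (j, g) k.succ
                then ((2 : 𝕂) ^ n) else 0))
            • b ((Fin.consEquiv (fun _ : Fin (m' + 1) => Fin n)) (j, g))
          = if g = (fun _ => j)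
              then (θ j * ((2 : 𝕂) ^ n) ^ m') • b (Fin.cons j g) else 0 := by
        intro g
        simp only [Fin.consEquiv_apply, Fin.cons_zero, Fin.cons_succ]
        by_cases hg : g = fun _ => j
        · rw [if_pos hg]
          congr 2
          subst hg
          simp
        · rw [if_neg hg]
          have : ∃ k, g k ≠ j := by
            by_contra hcon
            push_neg at hcon
            exact hg (funext hcon)
          obtain ⟨k, hk⟩ := this
          have hz : (∏ k' : Fin m', if j = g k' then ((2 : 𝕂) ^ n) else 0) = 0 :=
            Finset.prod_eq_zero (Finset.mem_univ k) (if_neg (fun h => hk h.symm))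
          rw [hz, mul_zero, zero_smul]
      rw [Finset.sum_congr rfl fun g _ => h3 g]
      rw [Finset.sum_ite_eq' Finset.univ (fun _ => j)
        (fun g => (θ j * ((2 : 𝕂) ^ n) ^ m') • b (Fin.cons j g)), if_pos (Finset.mem_univ _)]
      have hcons : b (Fin.cons j (fun _ => j)) = a j := by
        rw [hb, ha]
        congr 1
        funext i
        induction i using Fin.cases <;> simp
      rw [hcons, smul_eq_mul, mul_right_comm, hθ_mul j, mul_comm]
    rw [Finset.sum_congr rfl fun j _ => hinner j, ← Finset.mul_sum]
    congr 1
    rw [RCLike.ofReal_sum]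
  -- final estimate
  have hS0 : (0 : ℝ) ≤ ∑ j, ‖a j‖ := Finset.sum_nonneg fun j _ => norm_nonneg _
  have hKpos : (0 : ℝ) < ((2 : ℝ) ^ n) ^ m' := by positivity
  have h2K : (((2 : 𝕂) ^ n) ^ m') = ((((2 : ℝ) ^ n) ^ m' : ℝ) : 𝕂) := by push_cast; ring
  have hnorm : ‖∑ ε : Fin m' → Fin n → Bool, T (x ε)‖
      = ((2 : ℝ) ^ n) ^ m' * ∑ j, ‖a j‖ := by
    rw [key, h2K, ← RCLike.ofReal_mul, RCLike.norm_ofReal,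
      abs_of_nonneg (mul_nonneg hKpos.le hS0)]
  have hεb : ∀ ε : Fin m' → Fin n → Bool, ‖T (x ε)‖ ≤ ‖T‖ := by
    intro ε
    calc ‖T (x ε)‖ ≤ ‖T‖ * ∏ i, ‖x ε i‖ := T.le_opNorm (x ε)
    _ ≤ ‖T‖ * 1 := mul_le_mul_of_nonneg_left
        (Finset.prod_le_one (fun i _ => norm_nonneg _) (fun i _ => hx_norm ε i))
        (norm_nonneg T)
    _ = ‖T‖ := mul_one _
  have hub : ((2 : ℝ) ^ n) ^ m' * ∑ j, ‖a j‖ ≤ ((2 : ℝ) ^ n) ^ m' * ‖T‖ := by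
    rw [← hnorm]
    calc ‖∑ ε : Fin m' → Fin n → Bool, T (x ε)‖
        ≤ ∑ ε : Fin m' → Fin n → Bool, ‖T (x ε)‖ := norm_sum_le _ _
    _ ≤ ∑ _ε : Fin m' → Fin n → Bool, ‖T‖ := Finset.sum_le_sum fun ε _ => hεb ε
    _ = ((2 : ℝ) ^ n) ^ m' * ‖T‖ := by
        rw [Finset.sum_const, Finset.card_univ, nsmul_eq_mul]
        congr 1
        push_cast [Fintype.card_fun, Fintype.card_bool, Fintype.card_fin]
        ring
  exact le_of_mul_le_mul_left hub hKpos
end
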